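/- arXiv:1603.09743 — 5 statements merged into one kernel-verified Lean document; each statement's English description precedes it below -/
import Mathlib

section
/- Let (R, m) be a Noetherian local ring with coefficient field k, let E be an R-injective hull of the residue field k, and fix a k-linear projection σ: E → k of E onto its socle (0 :_E m) ≅ k. For every finitely generated R-module M, the map Φ_M: Hom_R(M, E) → Hom_{cont,k}(M, k) given by post-composition with σ (Φ_M(φ) = σ ∘ φ) is an isomorphism of R-modules, functorial in M. In particular, if M has finite length, Hom_R(M,E) ≅ Hom_k(M,k). -/
open IsLocalRing Submodule

section aux
variable {R : Type} [CommRing R] [IsNoetherianRing R] [IsLocalRing R]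

/-- Every element of an essential extension of the residue field is `a`-power-torsion for
`a` in the maximal ideal. -/
lemma aux_tors {E : Type} [AddCommGroup E] [Module R E] (e : E)
    (he : ∀ r : R, r • e = 0 ↔ r ∈ maximalIdeal R)
    (hess : ∀ N : Submodule R E, N ≠ ⊥ → N ⊓ Submodule.span R {e} ≠ ⊥)
    (hene : e ≠ 0) (x : E) {a : R} (ha : a ∈ maximalIdeal R) :
    ∃ n : ℕ, a ^ n • x = 0 := by
  classical
  set f : ℕ →o Ideal R :=
    ⟨fun n => LinearMap.ker (LinearMap.toSpanSingleton R E (a ^ n • x)), by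
      intro i j hij
      induction hij with
      | refl => exact le_rfl
      | step _ ih => ?_
      refine le_trans ih fun s hs => ?_
      simp only [LinearMap.mem_ker, LinearMap.toSpanSingleton_apply] at hs ⊢
      rw [pow_succ, mul_comm, mul_smul, smul_comm, hs, smul_zero]⟩
  obtain ⟨n, hn⟩ := monotone_stabilizes_iff_noetherian.mpr inferInstance f
  refine ⟨n, ?_⟩
  by_contra hy
  have hspan : Submodule.span R {a ^ n • x} ≠ ⊥ := by
    simpa [Submodule.span_singleton_eq_bot] using hy
  obtain ⟨z, hz, hz0⟩ := Submodule.exists_mem_ne_zero_of_ne_bot (hess _ hspan)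
  obtain ⟨r, hr⟩ := Submodule.mem_span_singleton.mp hz.1
  obtain ⟨s, hs⟩ := Submodule.mem_span_singleton.mp hz.2
  have hsu : IsUnit s := by
    by_contra hsu
    exact hz0 (hs ▸ (he s).mpr hsu)
  obtain ⟨u, rfl⟩ := hsu
  have hez : e = ((u⁻¹ : Rˣ) * r) • (a ^ n • x) := by
    rw [mul_smul, hr, ← hs, ← smul_assoc, smul_eq_mul, Units.inv_mul, one_smul]
  have hae : a • e = 0 := (he a).mpr ha
  have hmem : ((u⁻¹ : Rˣ) * r : R) ∈ f (n + 1) := by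
    simp only [f, OrderHom.coe_mk, LinearMap.mem_ker, LinearMap.toSpanSingleton_apply]
    change ((u⁻¹ : Rˣ) * r : R) • (a ^ (n + 1) • x) = 0
    rw [mul_smul, pow_succ, mul_comm (a ^ n) a, mul_smul a, smul_comm r a, hr,
      smul_comm ((u⁻¹ : Rˣ) : R) a, ← hs, smul_smul ((u⁻¹ : Rˣ) : R), Units.inv_mul, one_smul, hae]
  rw [← hn (n + 1) (Nat.le_succ n)] at hmem
  simp only [f, OrderHom.coe_mk, LinearMap.mem_ker, LinearMap.toSpanSingleton_apply] at hmem
  change ((u⁻¹ : Rˣ) * r : R) • (a ^ n • x) = 0 at hmem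
  rw [hmem] at hez
  exact hene hez

lemma aux_pow_ann {E : Type} [AddCommGroup E] [Module R E] (e : E)
    (he : ∀ r : R, r • e = 0 ↔ r ∈ maximalIdeal R)
    (hess : ∀ N : Submodule R E, N ≠ ⊥ → N ⊓ Submodule.span R {e} ≠ ⊥)
    (hene : e ≠ 0) (x : E) :
    ∃ t : ℕ, ∀ r ∈ (maximalIdeal R) ^ t, r • x = 0 := by
  set I : Ideal R := LinearMap.ker (LinearMap.toSpanSingleton R E x) with hI
  have hle : maximalIdeal R ≤ I.radical := by
    intro a ha
    obtain ⟨n, hn⟩ := aux_tors e he hess hene x ha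
    exact ⟨n, by simpa [I, LinearMap.mem_ker, LinearMap.toSpanSingleton_apply] using hn⟩
  obtain ⟨t, ht⟩ := Ideal.exists_pow_le_of_le_radical_of_fg hle (IsNoetherian.noetherian _)
  refine ⟨t, fun r hr => ?_⟩
  have := ht hr
  simpa [I, LinearMap.mem_ker, LinearMap.toSpanSingleton_apply] using this

end aux

section aux2
variable {R : Type} [CommRing R] [IsLocalRing R] (k : Type) [Field k] [Algebra k R]

lemma aux_residue (hcoef : Function.Bijective ((residue R).comp (algebraMap k R))) (r : R) :
    ∃ c : k, r - algebraMap k R c ∈ maximalIdeal R := by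
  obtain ⟨c, hc⟩ := hcoef.2 (residue R r)
  refine ⟨c, ?_⟩
  have h : residue R (algebraMap k R c) = residue R r := hc
  have : residue R (r - algebraMap k R c) = 0 := by rw [map_sub, h, sub_self]
  exact (Ideal.Quotient.eq_zero_iff_mem).mp this

lemma aux_span_k {K : Type} [AddCommGroup K] [Module R K] [Module k K] [IsScalarTower k R K]
    (hcoef : Function.Bijective ((residue R).comp (algebraMap k R)))
    (hkill : ∀ x : K, ∀ r ∈ maximalIdeal R, r • x = 0)
    (T : Set K) (hT : span R T = ⊤) : span k T = ⊤ := by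
  let P : Submodule R K :=
    { carrier := (span k T : Set K)
      add_mem' := fun h1 h2 => add_mem h1 h2
      zero_mem' := zero_mem _
      smul_mem' := by
        intro r x hx
        obtain ⟨c, hc⟩ := aux_residue k hcoef r
        have h0 : (r - algebraMap k R c) • x = 0 := hkill x _ hc
        have : r • x = c • x := by
          rw [sub_smul] at h0
          have := sub_eq_zero.mp h0
          rw [this, algebraMap_smul]
        simpa only [SetLike.mem_coe, this] using smul_mem (span k T) c hx }
  have htop : (⊤ : Submodule R K) ≤ P := by
    rw [← hT]
    exact span_le.mpr (fun x hx => subset_span hx)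
  rw [eq_top_iff]
  exact fun x _ => htop trivial

variable [IsNoetherianRing R]

lemma aux_artinian (hcoef : Function.Bijective ((residue R).comp (algebraMap k R))) :
    ∀ (t : ℕ) (K : Type) [AddCommGroup K] [Module R K] [Module k K]
    [IsScalarTower k R K] [Module.Finite R K],
    (∀ x : K, ∀ r ∈ (maximalIdeal R) ^ t, r • x = 0) → IsArtinian R K := by
  intro t
  induction t with
  | zero =>
    intro K _ _ _ _ _ hkill
    haveI : Subsingleton K := ⟨fun a b => by
      have ha : a = 0 := by
        have := hkill a 1 (by simp [pow_zero, Ideal.one_eq_top])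
        simpa using this
      have hb : b = 0 := by
        have := hkill b 1 (by simp [pow_zero, Ideal.one_eq_top])
        simpa using this
      rw [ha, hb]⟩
    infer_instance
  | succ t ih =>
    intro K _ _ _ _ _ hkill
    set S : Submodule R K := maximalIdeal R • ⊤ with hS
    have hSkill : ∀ y ∈ S, ∀ r ∈ (maximalIdeal R) ^ t, r • y = 0 := by
      intro y hy r hr
      refine Submodule.smul_induction_on hy ?_ ?_
      · intro a ha z _
        rw [smul_smul]
        exact hkill z _ (by rw [pow_succ]; exact Ideal.mul_mem_mul hr ha)
      · intro y1 y2 h1 h2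
        rw [smul_add, h1, h2, add_zero]
    haveI : IsArtinian R S := by
      haveI : Module.Finite R S :=
        Module.Finite.iff_fg.mpr (IsNoetherian.noetherian S)
      exact ih (↥S) (fun x r hr => Subtype.ext (by
        simpa using hSkill x x.2 r hr))
    haveI : IsArtinian R (K ⧸ S) := by
      have hkillq : ∀ x : K ⧸ S, ∀ r ∈ maximalIdeal R, r • x = 0 := by
        intro x r hr
        obtain ⟨y, rfl⟩ := S.mkQ_surjective x
        rw [← map_smul]
        exact (Submodule.Quotient.mk_eq_zero S).mpr (smul_mem_smul hr trivial)
      obtain ⟨T, hTspan⟩ := (Module.Finite.fg_top : (⊤ : Submodule R (K ⧸ S)).FG)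
      have hk : span k (T : Set (K ⧸ S)) = ⊤ := aux_span_k k hcoef hkillq _ hTspan
      haveI : Module.Finite k (K ⧸ S) := ⟨⟨T, hk⟩⟩
      exact isArtinian_of_tower k inferInstance
    exact isArtinian_of_range_eq_ker S.subtype S.mkQ
      (by rw [Submodule.range_subtype, Submodule.ker_mkQ])

end aux2

section aux3
variable {R : Type} [CommRing R] [IsLocalRing R] (k : Type) [Field k] [Algebra k R]

lemma aux_residue' (hcoef : Function.Bijective ((residue R).comp (algebraMap k R))) (r : R) :
    ∃ c : k, r - algebraMap k R c ∈ maximalIdeal R := by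
  obtain ⟨c, hc⟩ := hcoef.2 (residue R r)
  refine ⟨c, ?_⟩
  have h : residue R (algebraMap k R c) = residue R r := hc
  have : residue R (r - algebraMap k R c) = 0 := by rw [map_sub, h, sub_self]
  exact (Ideal.Quotient.eq_zero_iff_mem).mp this

lemma aux_surj
    (hcoef : Function.Bijective ((residue R).comp (algebraMap k R)))
    {E : Type} [AddCommGroup E] [Module R E] [Module k E] [IsScalarTower k R E]
    (hEinj : Module.Injective R E) (e : E)
    (he0 : ∀ r ∈ maximalIdeal R, r • e = 0)
    (σ : E →ₗ[k] k) (hσe : σ e = 1) :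
    ∀ (M : Type) [AddCommGroup M] [Module R M], IsFiniteLength R M →
      ∀ [Module k M] [IsScalarTower k R M] (g : M →ₗ[k] k),
        ∃ φ : M →ₗ[R] E, ∀ x : M, σ (φ x) = g x := by
  intro M _ _ h
  induction h with
  | of_subsingleton =>
    intro _ _ g
    exact ⟨0, fun x => by rw [Subsingleton.elim x 0]; simp⟩
  | @of_simple_quotient M instA instM N instS hNfl ih =>
    intro instk insttower g
    -- the maximal ideal kills M ⧸ N
    have hqkill : ∀ q : M ⧸ N, ∀ r ∈ maximalIdeal R, r • q = 0 := by
      have htop : (maximalIdeal R • ⊤ : Submodule R (M ⧸ N)) = ⊥ := by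
        rcases eq_bot_or_eq_top (maximalIdeal R • ⊤ : Submodule R (M ⧸ N)) with hb | ht
        · exact hb
        · exfalso
          haveI := IsSimpleModule.nontrivial R (M ⧸ N)
          obtain ⟨v, hv⟩ := exists_ne (0 : M ⧸ N)
          have hsp : Submodule.span R {v} = ⊤ := by
            rcases eq_bot_or_eq_top (Submodule.span R {v}) with h1 | h1
            · exact absurd (Submodule.span_singleton_eq_bot.mp h1) hv
            · exact h1
          have hfg : (⊤ : Submodule R (M ⧸ N)).FG := ⟨{v}, by simpa using hsp⟩
          have hjac : maximalIdeal R ≤ Ideal.jacobson ⊥ :=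
            IsLocalRing.maximalIdeal_le_jacobson ⊥
          have := Submodule.eq_bot_of_le_smul_of_le_jacobson_bot (maximalIdeal R) ⊤ hfg
            (le_of_eq ht.symm) hjac
          exact absurd this top_ne_bot
      intro q r hr
      have : r • q ∈ (maximalIdeal R • ⊤ : Submodule R (M ⧸ N)) :=
        smul_mem_smul hr trivial
      rw [htop] at this
      simpa using this
    -- restrict g to N and use induction hypothesis
    obtain ⟨φ', hφ'⟩ := ih (g.comp ((N.subtype).restrictScalars k))
    -- extend to M by injectivity of E
    obtain ⟨φ₀, hφ₀⟩ := hEinj.out N.subtype N.injective_subtype φ'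
    -- the defect functional
    set hfun : M →ₗ[k] k := g - σ.comp (φ₀.restrictScalars k) with hhfun
    have hhN : ∀ x ∈ N, hfun x = 0 := by
      intro x hx
      have h1 : φ₀ x = φ' ⟨x, hx⟩ := hφ₀ ⟨x, hx⟩
      simp only [hhfun, LinearMap.sub_apply, LinearMap.coe_comp, Function.comp_apply,
        LinearMap.coe_restrictScalars, h1, hφ']
      simp
    -- the correction map x ↦ (hfun x) • e, which is R-linear
    let φ₁ : M →ₗ[R] E :=
      { toFun := fun x => hfun x • e
        map_add' := fun x y => by
          show hfun (x + y) • e = hfun x • e + hfun y • e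
          rw [map_add, add_smul]
        map_smul' := by
          intro r x
          obtain ⟨c, hc⟩ := aux_residue' k hcoef r
          have hmemN : r • x - c • x ∈ N := by
            rw [← Submodule.Quotient.mk_eq_zero]
            have : Submodule.Quotient.mk (p := N) (r • x - c • x)
                = (r - algebraMap k R c) • (Submodule.Quotient.mk (p := N) x) := by
              rw [sub_smul, algebraMap_smul]
              rfl
            rw [this]
            exact hqkill _ _ hc
          have h1 : hfun (r • x) = c * hfun x := by
            have e1 := hhN _ hmemN
            rw [map_sub] at e1
            have e2 : hfun (c • x) = c * hfun x := by rw [map_smul, smul_eq_mul]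
            rw [e2] at e1
            exact sub_eq_zero.mp e1
          have h2 : r • e = c • e := by
            have := he0 _ hc
            rw [sub_smul, algebraMap_smul] at this
            exact sub_eq_zero.mp this
          simp only [RingHom.id_apply, h1]
          rw [smul_comm r (hfun x) e, h2, smul_smul, mul_comm (hfun x) c]
        }
    refine ⟨φ₀ + φ₁, fun x => ?_⟩
    have : σ (φ₁ x) = hfun x := by
      show σ (hfun x • e) = hfun x
      rw [map_smul, hσe, smul_eq_mul, mul_one]
    rw [LinearMap.add_apply, map_add, this]
    simp [hhfun]

end aux3

theorem stmt8 {R : Type} [CommRing R] [IsNoetherianRing R] [IsLocalRing R]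
    (k : Type) [Field k] [Algebra k R]
    -- k is a coefficient field of R
    (hcoef : Function.Bijective ((IsLocalRing.residue R).comp (algebraMap k R)))
    (E : Type) [AddCommGroup E] [Module R E] [Module k E] [IsScalarTower k R E]
    -- E is an injective hull of the residue field k = R/m :
    (hEinj : Module.Injective R E) (e : E)
    (he : ∀ r : R, r • e = 0 ↔ r ∈ IsLocalRing.maximalIdeal R)
    (hess : ∀ N : Submodule R E, N ≠ ⊥ → N ⊓ Submodule.span R {e} ≠ ⊥)
    -- σ is a k-linear projection of E onto its socle (identified with k via e) :
    (σ : E →ₗ[k] k) (hσe : σ e = 1)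
    (hσsoc : ∀ x : E, (∀ r ∈ IsLocalRing.maximalIdeal R, r • x = 0) → σ x = 0 → x = 0)
    (M : Type) [AddCommGroup M] [Module R M] [Module k M] [IsScalarTower k R M]
    (hM : Module.Finite R M) :
    -- (1) Φ_M(φ) = σ ∘ φ is m-adically continuous (it kills m^t·M for some t)
    (∀ φ : M →ₗ[R] E, ∃ t : ℕ,
        ∀ x ∈ ((IsLocalRing.maximalIdeal R) ^ t • ⊤ : Submodule R M), σ (φ x) = 0) ∧
    -- (2) Φ_M is injective
    (∀ φ ψ : M →ₗ[R] E, (∀ x : M, σ (φ x) = σ (ψ x)) → φ = ψ) ∧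
    -- (3) Φ_M is surjective onto the m-adically continuous k-linear functionals
    (∀ g : M →ₗ[k] k,
        (∃ t : ℕ, ∀ x ∈ ((IsLocalRing.maximalIdeal R) ^ t • ⊤ : Submodule R M), g x = 0) →
        ∃ φ : M →ₗ[R] E, ∀ x : M, σ (φ x) = g x) ∧
    -- (4) Φ_M is R-linear for the action (r·λ)(x) = λ(r·x) on functionals
    (∀ (r : R) (φ : M →ₗ[R] E) (x : M), σ ((r • φ) x) = σ (φ (r • x))) ∧
    -- (5) Φ is functorial in M
    (∀ (M' : Type) [AddCommGroup M'] [Module R M'],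
        ∀ (f : M' →ₗ[R] M) (φ : M →ₗ[R] E) (x : M'), σ ((φ ∘ₗ f) x) = σ (φ (f x))) ∧
    -- (6) special case: if M has finite length, Φ_M surjects onto all of Hom_k(M,k)
    (IsFiniteLength R M →
        ∀ g : M →ₗ[k] k, ∃ φ : M →ₗ[R] E, ∀ x : M, σ (φ x) = g x) := by
  classical
  have hene : e ≠ 0 := by
    intro h
    apply (one_ne_zero : (1 : k) ≠ 0)
    rw [← hσe, h, map_zero]
  have he0 : ∀ r ∈ maximalIdeal R, r • e = 0 := fun r hr => (he r).mpr hr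
  have hpow : ∀ y : E, ∃ t : ℕ, ∀ r ∈ (maximalIdeal R) ^ t, r • y = 0 :=
    aux_pow_ann e he hess hene
  choose tt htt using hpow
  refine ⟨?_, ?_, ?_, ?_, ?_, ?_⟩
  · -- (1)
    intro φ
    obtain ⟨s, hs⟩ := (Module.Finite.fg_top : (⊤ : Submodule R M).FG)
    refine ⟨s.sup fun x => tt (φ x), ?_⟩
    set t := s.sup fun x => tt (φ x) with ht
    have hann : ∀ x : M, ∀ r ∈ (maximalIdeal R) ^ t, r • φ x = 0 := by
      let P : Submodule R M :=
        { carrier := {x : M | ∀ r ∈ (maximalIdeal R) ^ t, r • φ x = 0}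
          add_mem' := by
            intro x y hx hy r hr
            rw [map_add, smul_add, hx r hr, hy r hr, add_zero]
          zero_mem' := by intro r hr; rw [map_zero, smul_zero]
          smul_mem' := by
            intro r' x hx r hr
            rw [map_smul, smul_smul]
            exact hx _ (Ideal.mul_mem_right r' _ hr) }
      have hsub : (s : Set M) ⊆ (P : Set M) := by
        intro x hx r hr
        refine htt (φ x) r (Ideal.pow_le_pow_right ?_ hr)
        exact Finset.le_sup (f := fun x => tt (φ x)) (Finset.mem_coe.mp hx)
      have : (⊤ : Submodule R M) ≤ P := by
        rw [← hs]
        exact Submodule.span_le.mpr hsub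
      exact fun x => this (Submodule.mem_top) 
    intro x hx
    have hφx : φ x = 0 := by
      refine Submodule.smul_induction_on hx ?_ ?_
      · intro r hr y _
        rw [map_smul]
        exact hann y r hr
      · intro y1 y2 h1 h2
        rw [map_add, h1, h2, add_zero]
    rw [hφx, map_zero]
  · -- (2)
    intro φ ψ hσφψ
    ext x
    by_contra hne
    set y := φ x - ψ x with hy
    have hy0 : y ≠ 0 := sub_ne_zero.mpr hne
    have hσy : ∀ r : R, σ (r • y) = 0 := by
      intro r
      have : r • y = φ (r • x) - ψ (r • x) := by
        rw [hy, smul_sub, map_smul, map_smul]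
      rw [this, map_sub, hσφψ, sub_self]
    have hex : ∃ t : ℕ, ∀ r ∈ (maximalIdeal R) ^ t, r • y = 0 := ⟨tt y, htt y⟩
    rcases hT : Nat.find hex with _ | t'
    · have hspec := Nat.find_spec hex
      rw [hT] at hspec
      have : (1 : R) • y = 0 := hspec 1 (by rw [pow_zero, Ideal.one_eq_top]; trivial)
      rw [one_smul] at this
      exact hy0 this
    · have hmin : ¬ (∀ r ∈ (maximalIdeal R) ^ t', r • y = 0) :=
        Nat.find_min hex (hT ▸ t'.lt_succ_self)
      push_neg at hmin
      obtain ⟨r, hr, hry⟩ := hmin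
      have hspec := Nat.find_spec hex
      rw [hT] at hspec
      have hzkill : ∀ a ∈ maximalIdeal R, a • (r • y) = 0 := by
        intro a ha
        rw [smul_smul, mul_comm, ← smul_smul]
        have : r • (a • y) = (r * a) • y := smul_smul r a y
        rw [smul_smul]
        exact hspec _ (by rw [pow_succ]; exact Ideal.mul_mem_mul hr ha)
      exact hry (hσsoc (r • y) hzkill (hσy r))
  · -- (3)
    rintro g ⟨t, hgt⟩
    set N : Submodule R M := (maximalIdeal R) ^ t • ⊤ with hN
    have hfl : IsFiniteLength R (M ⧸ N) := by
      rw [isFiniteLength_iff_isNoetherian_isArtinian]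
      refine ⟨inferInstance, ?_⟩
      refine aux_artinian k hcoef t (M ⧸ N) ?_
      intro x r hr
      obtain ⟨y, rfl⟩ := N.mkQ_surjective x
      rw [← map_smul]
      exact (Submodule.Quotient.mk_eq_zero N).mpr (Submodule.smul_mem_smul hr trivial)
    have hle : N.restrictScalars k ≤ LinearMap.ker g := fun x hx => hgt x hx
    set g2 : (M ⧸ N) →ₗ[k] k :=
      ((N.restrictScalars k).liftQ g hle) ∘ₗ
        ((Submodule.Quotient.restrictScalarsEquiv k N).symm : (M ⧸ N) →ₗ[k] _) with hg2
    obtain ⟨φq, hφq⟩ := aux_surj k hcoef hEinj e he0 σ hσe (M ⧸ N) hfl g2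
    refine ⟨φq ∘ₗ N.mkQ, fun x => ?_⟩
    have h1 : g2 (N.mkQ x) = g x := by
      show g2 (Submodule.Quotient.mk x) = g x
      rw [hg2, LinearMap.comp_apply, LinearEquiv.coe_coe,
        Submodule.Quotient.restrictScalarsEquiv_symm_mk, Submodule.liftQ_apply]
    rw [LinearMap.comp_apply, hφq, h1]
  · -- (4)
    intro r φ x
    rw [LinearMap.smul_apply, ← φ.map_smul]
  · -- (5)
    intro M' _ _ f φ x
    rfl
  · -- (6)
    intro hfl g
    exact aux_surj k hcoef hEinj e he0 σ hσe M hfl g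
end

section
/- Let (R, m) be a Noetherian local ring with coefficient field k, let E be an R-injective hull of k, and fix a k-linear projection σ: E → k of E onto its socle. For every R-module M, the map Φ_M: Hom_R(M, E) → Hom_k^Σ(M, k) given by post-composition with σ is an isomorphism of R-modules, functorial in M. -/
/-!
STATEMENT 9: Let (R, m) be a Noetherian local ring with coefficient field k, let E be an
R-injective hull of k, and fix a k-linear projection σ: E → k of E onto its socle.  For
every R-module M, the map Φ_M : Hom_R(M, E) → Hom_k^Σ(M, k) given by post-composition
with σ is an isomorphism of R-modules, functorial in M.

A k-linear functional M → k is Σ-continuous iff it annihilates m^t·P for some t, for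
every finitely generated submodule P ⊆ M.  The conclusion is expressed by stating that
σ ∘ φ is Σ-continuous for each φ ∈ Hom_R(M,E), that Φ_M is injective, that it surjects
onto the Σ-continuous functionals, that it is R-linear for the action (r·λ)(x) = λ(r·x),
and that it is functorial in M.
-/

/-- A `k`-linear functional on an `R`-module is Σ-continuous iff it annihilates
`I^t • P` for some `t`, for every finitely generated `R`-submodule `P`. -/
def SigmaContToK (k : Type) {R M : Type} [CommRing R] [Field k] [Algebra k R]
    [AddCommGroup M] [Module R M] [Module k M]
    (I : Ideal R) (f : M →ₗ[k] k) : Prop :=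
  ∀ P : Submodule R M, P.FG → ∃ t : ℕ, ∀ x ∈ (I ^ t • P : Submodule R M), f x = 0


open IsLocalRing

section Aux

set_option linter.unusedSectionVars false

variable {R : Type} [CommRing R] [IsNoetherianRing R] [IsLocalRing R]
  {k : Type} [Field k] [Algebra k R]
  {E : Type} [AddCommGroup E] [Module R E] [Module k E] [IsScalarTower k R E]

/-- smul by k and R commute. -/
theorem ksmul_comm' {N : Type} [AddCommGroup N] [Module R N] [Module k N]
    [IsScalarTower k R N] (s : R) (c : k) (x : N) : s • (c • x) = c • (s • x) := by
  rw [← algebraMap_smul R c x, ← algebraMap_smul R c (s • x), smul_smul, smul_smul, mul_comm]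

/-- r ↦ r • w as a k-linear map. -/
def toSmul {N : Type} [AddCommGroup N] [Module R N] [Module k N]
    [IsScalarTower k R N] (w : N) : R →ₗ[k] N where
  toFun r := r • w
  map_add' r s := add_smul r s w
  map_smul' c r := smul_assoc c r w

@[simp] theorem toSmul_apply {N : Type} [AddCommGroup N] [Module R N] [Module k N]
    [IsScalarTower k R N] (w : N) (r : R) : toSmul (k := k) w r = r • w := rfl

/-- Every element of E is killed by a power of the maximal ideal. -/
theorem torsion_lemma (e : E) (he0 : e ≠ 0)
    (he : ∀ r : R, r • e = 0 ↔ r ∈ maximalIdeal R)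
    (hess : ∀ N : Submodule R E, N ≠ ⊥ → N ⊓ Submodule.span R {e} ≠ ⊥)
    (y : E) : ∃ t : ℕ, ∀ r ∈ (maximalIdeal R) ^ t, r • y = 0 := by
  by_contra hcon
  push_neg at hcon
  have key : ∀ t : ℕ, ∃ a ∈ (maximalIdeal R) ^ t, a • y = e := by
    intro t
    obtain ⟨r, hr, hry⟩ := hcon t
    have hN : ((maximalIdeal R) ^ t • Submodule.span R {y} : Submodule R E) ≠ ⊥ := by
      intro hb
      apply hry
      have : r • y ∈ (maximalIdeal R) ^ t • Submodule.span R {y} :=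
        Submodule.smul_mem_smul hr (Submodule.mem_span_singleton_self y)
      rw [hb] at this; simpa using this
    obtain ⟨z, hz, hz0⟩ := Submodule.exists_mem_ne_zero_of_ne_bot (hess _ hN)
    obtain ⟨hz1, hz2⟩ := Submodule.mem_inf.mp hz
    obtain ⟨s, rfl⟩ := Submodule.mem_span_singleton.mp hz2
    have hs : s ∉ maximalIdeal R := fun hsm => hz0 ((he s).mpr hsm)
    have hsu : IsUnit s := by
      by_contra hns
      exact hs (mem_maximalIdeal s |>.mpr hns)
    obtain ⟨u, rfl⟩ := hsu
    have he_mem : e ∈ ((maximalIdeal R) ^ t • Submodule.span R {y} : Submodule R E) := by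
      have := Submodule.smul_mem _ ((u⁻¹ : Rˣ) : R) hz1
      rwa [smul_smul, Units.inv_mul, one_smul] at this
    rw [Submodule.mem_smul_span_singleton] at he_mem
    obtain ⟨a, ha, hae⟩ := he_mem
    exact ⟨a, ha, hae⟩
  -- Krull intersection in R ⧸ ker f, f = toSpanSingleton y
  set f : R →ₗ[R] E := LinearMap.toSpanSingleton R E y with hf
  set K := LinearMap.ker f with hK
  obtain ⟨a0, ha0, ha0e⟩ := key 0
  have hmem : ∀ t : ℕ, K.mkQ a0 ∈ ((maximalIdeal R) ^ t • ⊤ : Submodule R (R ⧸ K)) := by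
    intro t
    obtain ⟨a, ha, hae⟩ := key t
    have hker : a0 - a ∈ K := by
      simp only [hK, LinearMap.mem_ker, map_sub]
      show a0 • y - a • y = 0
      rw [ha0e, hae, sub_self]
    have : K.mkQ a0 = K.mkQ a := by
      rw [← sub_eq_zero, ← map_sub, Submodule.mkQ_apply, Submodule.Quotient.mk_eq_zero]
      exact hker
    rw [this]
    have : K.mkQ a = a • K.mkQ 1 := by
      rw [← map_smul, smul_eq_mul, mul_one]
    rw [this]
    exact Submodule.smul_mem_smul ha trivial
  have hkrull : (⨅ t : ℕ, (maximalIdeal R) ^ t • ⊤ : Submodule R (R ⧸ K)) = ⊥ :=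
    (maximalIdeal R).iInf_pow_smul_eq_bot_of_isLocalRing (M := R ⧸ K)
      (Ideal.IsMaximal.ne_top (maximalIdeal.isMaximal R))
  have : K.mkQ a0 = 0 := by
    have := Submodule.mem_iInf (fun t : ℕ => ((maximalIdeal R) ^ t • ⊤ : Submodule R (R ⧸ K))) |>.mpr hmem
    rw [hkrull] at this
    simpa using this
  rw [Submodule.mkQ_apply, Submodule.Quotient.mk_eq_zero] at this
  have : a0 • y = 0 := this
  rw [ha0e] at this
  exact he0 this


theorem fg_torsion (e : E) (he0 : e ≠ 0)
    (he : ∀ r : R, r • e = 0 ↔ r ∈ maximalIdeal R)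
    (hess : ∀ N : Submodule R E, N ≠ ⊥ → N ⊓ Submodule.span R {e} ≠ ⊥)
    (htor : ∀ y : E, ∃ t : ℕ, ∀ r ∈ (maximalIdeal R) ^ t, r • y = 0)
    (N : Submodule R E) (hN : N.FG) :
    ∃ t : ℕ, ∀ r ∈ (maximalIdeal R) ^ t, ∀ x ∈ N, r • x = 0 := by
  refine Submodule.fg_induction (motive := fun N _ => ∃ t : ℕ, ∀ r ∈ (maximalIdeal R) ^ t, ∀ x ∈ N, r • x = 0) ?_ ?_ N hN
  · intro y
    obtain ⟨t, ht⟩ := htor y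
    refine ⟨t, fun r hr x hx => ?_⟩
    obtain ⟨s, rfl⟩ := Submodule.mem_span_singleton.mp hx
    rw [smul_comm]
    rw [ht r hr, smul_zero]
  · rintro N₁ N₂ - - ⟨t₁, h₁⟩ ⟨t₂, h₂⟩
    refine ⟨t₁ + t₂, fun r hr x hx => ?_⟩
    obtain ⟨x₁, hx₁, x₂, hx₂, rfl⟩ := Submodule.mem_sup.mp hx
    rw [smul_add, h₁ r (Ideal.pow_le_pow_right (Nat.le_add_right _ _) hr) x₁ hx₁,
      h₂ r (Ideal.pow_le_pow_right (Nat.le_add_left _ _) hr) x₂ hx₂, add_zero]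

theorem claimA (hEinj : Module.Injective R E)
    (hcoef : Function.Bijective ((IsLocalRing.residue R).comp (algebraMap k R)))
    (e : E) (he : ∀ r : R, r • e = 0 ↔ r ∈ maximalIdeal R)
    (σ : E →ₗ[k] k) (hσe : σ e = 1) :
    ∀ J : Ideal R, (∃ u : ℕ, (maximalIdeal R) ^ u ≤ J) →
      ∀ δ : R →ₗ[k] k, (∀ r ∈ J, δ r = 0) →
        ∃ w : E, (∀ s ∈ J, s • w = 0) ∧ ∀ r : R, σ (r • w) = δ r := by
  classical
  have wf : WellFounded ((· > ·) : Ideal R → Ideal R → Prop) :=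
    (isNoetherian_iff (R := R) (M := R)).mp inferInstance
  intro J
  induction J using WellFounded.induction wf with
  | _ J IH =>
  rintro ⟨u, hu⟩ δ hδ
  by_cases hJ : J = ⊤
  · refine ⟨0, fun s _ => smul_zero s, fun r => ?_⟩
    rw [smul_zero, map_zero, hδ r (hJ ▸ Submodule.mem_top)]
  · -- minimal i with m^i ≤ J
    have hex : ∃ i : ℕ, (maximalIdeal R) ^ i ≤ J := ⟨u, hu⟩
    set i := Nat.find hex with hi
    have hile : (maximalIdeal R) ^ i ≤ J := Nat.find_spec hex
    have hipos : 0 < i := by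
      rcases Nat.eq_zero_or_pos i with h0 | h
      · exfalso; apply hJ
        have := hile
        rw [h0, pow_zero, Ideal.one_eq_top] at this
        exact top_le_iff.mp this
      · exact h
    have hnotle : ¬ (maximalIdeal R) ^ (i - 1) ≤ J := Nat.find_min hex (Nat.sub_lt hipos one_pos)
    obtain ⟨a, ha, haJ⟩ := SetLike.not_le_iff_exists.mp hnotle
    have hma : ∀ n ∈ maximalIdeal R, n * a ∈ J := by
      intro n hn
      have : n * a ∈ (maximalIdeal R) ^ i := by
        have : (maximalIdeal R) * (maximalIdeal R) ^ (i - 1) = (maximalIdeal R) ^ i := by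
          rw [← pow_succ']
          congr 1
          omega
        rw [← this]
        exact Ideal.mul_mem_mul hn ha
      exact hile this
    -- construct w₁ with a • w₁ = e and J • w₁ = 0
    set Q := R ⧸ (J : Submodule R R) with hQ
    set h1 : R →ₗ[R] Q := LinearMap.toSpanSingleton R Q ((J : Submodule R R).mkQ a) with hh1
    set f1 : R →ₗ[R] E := LinearMap.toSpanSingleton R E e with hf1
    have hker : LinearMap.ker h1 ≤ LinearMap.ker f1 := by
      intro r hr
      have hr' : r • (J : Submodule R R).mkQ a = 0 := hr
      rw [← map_smul, Submodule.mkQ_apply, Submodule.Quotient.mk_eq_zero] at hr'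
      have hrm : r ∈ maximalIdeal R := by
        by_contra hrm
        have hru : IsUnit r := by
          by_contra hnr
          exact hrm (mem_maximalIdeal r |>.mpr hnr)
        obtain ⟨v, rfl⟩ := hru
        apply haJ
        have : ((v⁻¹ : Rˣ) : R) • ((v : R) • a) ∈ J := Submodule.smul_mem _ _ hr'
        rwa [smul_smul, Units.inv_mul, one_smul] at this
      show r • e = 0
      exact (he r).mpr hrm
    set X := R ⧸ LinearMap.ker h1 with hX
    set ι : X →ₗ[R] Q := (LinearMap.ker h1).liftQ h1 le_rfl with hι
    have hιinj : Function.Injective ι := by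
      rw [← LinearMap.ker_eq_bot]
      exact Submodule.ker_liftQ_eq_bot _ _ _ le_rfl
    set g1 : X →ₗ[R] E := (LinearMap.ker h1).liftQ f1 hker with hg1
    obtain ⟨Ψ, hΨ⟩ := hEinj.out ι hιinj g1
    set w₁ := Ψ ((J : Submodule R R).mkQ 1) with hw₁
    have hw₁J : ∀ s ∈ J, s • w₁ = 0 := by
      intro s hs
      rw [hw₁, ← map_smul, ← map_smul, smul_eq_mul, mul_one]
      have : (J : Submodule R R).mkQ s = 0 := by
        rw [Submodule.mkQ_apply, Submodule.Quotient.mk_eq_zero]; exact hs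
      rw [this, map_zero]
    have hw₁a : a • w₁ = e := by
      have h2 : (J : Submodule R R).mkQ a = ι ((LinearMap.ker h1).mkQ 1) := by
        have h3 : ι ((LinearMap.ker h1).mkQ 1) = h1 1 := Submodule.liftQ_apply _ h1 _
        rw [h3, hh1]
        show _ = (1 : R) • (J : Submodule R R).mkQ a
        rw [one_smul]
      have h4 : g1 ((LinearMap.ker h1).mkQ 1) = f1 1 := Submodule.liftQ_apply _ f1 _
      rw [hw₁, ← map_smul, ← map_smul, smul_eq_mul, mul_one, h2, hΨ, h4]
      show (1 : R) • e = e
      rw [one_smul]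
    -- the functional τ r = σ (r • w₁)
    set τ : R →ₗ[k] k := σ.comp (toSmul (k := k) w₁) with hτ
    set J₁ : Ideal R := J ⊔ Ideal.span {a} with hJ₁
    have hJlt : J < J₁ := lt_of_le_of_ne le_sup_left (by
      intro hEq
      apply haJ
      rw [hEq]
      exact (le_sup_right : Ideal.span {a} ≤ J ⊔ Ideal.span {a}) (Ideal.subset_span rfl))
    -- residue decomposition
    have hres : ∀ r : R, ∃ lam : k, r - algebraMap k R lam ∈ maximalIdeal R := by
      intro r
      obtain ⟨lam, hlam⟩ := hcoef.2 (IsLocalRing.residue R r)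
      refine ⟨lam, ?_⟩
      have : IsLocalRing.residue R (r - algebraMap k R lam) = 0 := by
        rw [map_sub, ← hlam]
        simp [RingHom.comp_apply]
      exact (Ideal.Quotient.eq_zero_iff_mem).mp this
    set δ' : R →ₗ[k] k := δ - δ a • τ with hδ'
    have hδ'J₁ : ∀ y ∈ J₁, δ' y = 0 := by
      intro y hy
      rw [hJ₁, Submodule.mem_sup] at hy
      obtain ⟨z, hz, ww, hww, rfl⟩ := hy
      obtain ⟨r, rfl⟩ := Ideal.mem_span_singleton'.mp hww
      have hz' : δ' z = 0 := by
        simp only [hδ', LinearMap.sub_apply, LinearMap.smul_apply, smul_eq_mul]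
        rw [hδ z hz]
        have : τ z = 0 := by
          simp only [hτ, LinearMap.comp_apply, toSmul_apply]
          rw [hw₁J z hz, map_zero]
        rw [this, mul_zero, zero_sub, neg_zero]
      have hra : δ' (r * a) = 0 := by
        obtain ⟨lam, hlam⟩ := hres r
        set n := r - algebraMap k R lam with hn
        have hrn : r = algebraMap k R lam + n := by rw [hn]; ring
        have hna : n * a ∈ J := hma n hlam
        have hδra : δ (r * a) = lam * δ a := by
          rw [hrn, add_mul, map_add, hδ _ hna]
          have : algebraMap k R lam * a = lam • a := (Algebra.smul_def lam a).symm
          rw [this, map_smul, smul_eq_mul, add_zero]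
        have hτra : τ (r * a) = lam := by
          simp only [hτ, LinearMap.comp_apply, toSmul_apply]
          rw [mul_smul, hw₁a]
          rw [hrn, add_smul, algebraMap_smul, (he n).mpr hlam, add_zero, map_smul,
            smul_eq_mul, hσe, mul_one]
        simp only [hδ', LinearMap.sub_apply, LinearMap.smul_apply, smul_eq_mul]
        rw [hδra, hτra]; ring
      rw [map_add, hz', hra, add_zero]
    have hu₁ : ∃ u : ℕ, (maximalIdeal R) ^ u ≤ J₁ := ⟨u, le_trans hu le_sup_left⟩
    obtain ⟨w', hw'1, hw'2⟩ := IH J₁ hJlt hu₁ δ' hδ'J₁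
    refine ⟨w' + δ a • w₁, ?_, ?_⟩
    · intro s hs
      rw [smul_add, hw'1 s ((le_sup_left : J ≤ J₁) hs), zero_add, ksmul_comm' s (δ a) w₁,
        hw₁J s hs, smul_zero]
    · intro r
      rw [smul_add, map_add, hw'2 r, ksmul_comm' r (δ a) w₁, map_smul]
      simp only [hδ', LinearMap.sub_apply, LinearMap.smul_apply, smul_eq_mul, hτ,
        LinearMap.comp_apply, toSmul_apply]
      ring

end Aux

theorem stmt9 {R : Type} [CommRing R] [IsNoetherianRing R] [IsLocalRing R]
    (k : Type) [Field k] [Algebra k R]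
    (hcoef : Function.Bijective ((IsLocalRing.residue R).comp (algebraMap k R)))
    (E : Type) [AddCommGroup E] [Module R E] [Module k E] [IsScalarTower k R E]
    (hEinj : Module.Injective R E) (e : E)
    (he : ∀ r : R, r • e = 0 ↔ r ∈ IsLocalRing.maximalIdeal R)
    (hess : ∀ N : Submodule R E, N ≠ ⊥ → N ⊓ Submodule.span R {e} ≠ ⊥)
    (σ : E →ₗ[k] k) (hσe : σ e = 1)
    (hσsoc : ∀ x : E, (∀ r ∈ IsLocalRing.maximalIdeal R, r • x = 0) → σ x = 0 → x = 0)
    (M : Type) [AddCommGroup M] [Module R M] [Module k M] [IsScalarTower k R M] :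
    -- (1) Φ_M(φ) = σ ∘ φ is Σ-continuous
    (∀ φ : M →ₗ[R] E,
        SigmaContToK k (IsLocalRing.maximalIdeal R) (σ ∘ₗ (φ.restrictScalars k))) ∧
    -- (2) Φ_M is injective
    (∀ φ ψ : M →ₗ[R] E, (∀ x : M, σ (φ x) = σ (ψ x)) → φ = ψ) ∧
    -- (3) Φ_M is surjective onto the Σ-continuous k-linear functionals
    (∀ g : M →ₗ[k] k, SigmaContToK k (IsLocalRing.maximalIdeal R) g →
        ∃ φ : M →ₗ[R] E, ∀ x : M, σ (φ x) = g x) ∧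
    -- (4) Φ_M is R-linear for the action (r·λ)(x) = λ(r·x) on functionals
    (∀ (r : R) (φ : M →ₗ[R] E) (x : M), σ ((r • φ) x) = σ (φ (r • x))) ∧
    -- (5) Φ is functorial in M
    (∀ (M' : Type) [AddCommGroup M'] [Module R M'],
        ∀ (f : M' →ₗ[R] M) (φ : M →ₗ[R] E) (x : M'), σ ((φ ∘ₗ f) x) = σ (φ (f x))) := by
    classical
  have he0 : e ≠ 0 := by
    intro h
    rw [h, map_zero] at hσe
    exact zero_ne_one hσe
  have htor := torsion_lemma e he0 he hess
  have hfg := fg_torsion e he0 he hess htor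
  refine ⟨?_, ?_, ?_, ?_, ?_⟩
  · -- (1)
    intro φ P hP
    obtain ⟨t, ht⟩ := hfg (P.map φ) (hP.map φ)
    refine ⟨t, fun x hx => ?_⟩
    have hφx : φ x = 0 := by
      have hmem : φ x ∈ (IsLocalRing.maximalIdeal R) ^ t • (P.map φ) := by
        rw [← Submodule.map_smul'']
        exact Submodule.mem_map_of_mem hx
      refine Submodule.smul_induction_on hmem (fun r hr n hn => ht r hr n hn) ?_
      intro y z hy hz; rw [hy, hz, add_zero]
    show σ (φ x) = 0
    rw [hφx, map_zero]
  · -- (2)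
    intro φ ψ h
    ext x
    by_contra hne
    set y := φ x - ψ x with hy
    have hy0 : y ≠ 0 := sub_ne_zero.mpr hne
    have hσy : ∀ r : R, σ (r • y) = 0 := by
      intro r
      have hr : r • y = φ (r • x) - ψ (r • x) := by rw [map_smul, map_smul, hy, smul_sub]
      rw [hr, map_sub, h (r • x), sub_self]
    obtain ⟨t, ht⟩ := htor y
    have hex : ∃ t, ∀ r ∈ (IsLocalRing.maximalIdeal R) ^ t, r • y = 0 := ⟨t, ht⟩
    set t0 := Nat.find hex with ht0d
    have ht0 := Nat.find_spec hex
    have ht0pos : 0 < t0 := by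
      rcases Nat.eq_zero_or_pos t0 with h0 | h
      · exfalso
        apply hy0
        have h1 := ht0 1 (by rw [← ht0d, h0, pow_zero, Ideal.one_eq_top]; trivial)
        simpa using h1
      · exact h
    have hmin := Nat.find_min hex (Nat.sub_lt ht0pos one_pos)
    push_neg at hmin
    obtain ⟨r, hr, hry⟩ := hmin
    have hz : ∀ n ∈ IsLocalRing.maximalIdeal R, n • (r • y) = 0 := by
      intro n hn
      rw [smul_smul]
      apply ht0
      have hmul : (IsLocalRing.maximalIdeal R) * (IsLocalRing.maximalIdeal R) ^ (t0 - 1)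
          = (IsLocalRing.maximalIdeal R) ^ t0 := by
        rw [← pow_succ']; congr 1; omega
      rw [← hmul]
      exact Ideal.mul_mem_mul hn hr
    exact hry (hσsoc (r • y) hz (hσy r))
  · -- (3)
    intro g hg
    set S : Set (Submodule R (M × E)) :=
      {G | (∀ w : E, ((0 : M), w) ∈ G → w = 0) ∧ ∀ p ∈ G, σ p.2 = g p.1} with hSd
    have hbot : (⊥ : Submodule R (M × E)) ∈ S := by
      constructor
      · intro w hw
        have h0 : ((0 : M), w) = 0 := hw
        exact congrArg Prod.snd h0
      · intro p hp
        have h0 : p = 0 := hp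
        rw [h0]
        show σ (0 : E) = g (0 : M)
        rw [map_zero, map_zero]
    obtain ⟨G, -, hGmax⟩ := zorn_le_nonempty₀ S (fun c hcS hchain y hyc => by
      refine ⟨sSup c, ⟨?_, ?_⟩, fun z hz => le_sSup hz⟩
      · intro w hw
        rw [Submodule.mem_sSup_of_directed ⟨y, hyc⟩ hchain.directedOn] at hw
        obtain ⟨G', hG'c, hw'⟩ := hw
        exact (hcS hG'c).1 w hw'
      · intro p hp
        rw [Submodule.mem_sSup_of_directed ⟨y, hyc⟩ hchain.directedOn] at hp
        obtain ⟨G', hG'c, hp'⟩ := hp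
        exact (hcS hG'c).2 p hp') ⊥ hbot
    have hGS : G ∈ S := hGmax.1
    have huniq : ∀ (y : M) (v v' : E), (y, v) ∈ G → (y, v') ∈ G → v = v' := by
      intro y v v' h1 h2
      have h3 : ((0 : M), v - v') ∈ G := by
        have h4 := G.sub_mem h1 h2
        have h5 : (y, v) - (y, v') = ((0 : M), v - v') := by
          rw [Prod.mk_sub_mk, sub_self]
        rwa [h5] at h4
      exact sub_eq_zero.mp (hGS.1 _ h3)
    have htotal : ∀ x : M, ∃ v : E, (x, v) ∈ G := by
      intro x
      by_contra hx
      push_neg at hx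
      set I : Ideal R := Submodule.comap (LinearMap.toSpanSingleton R M x)
        (G.map (LinearMap.fst R M E)) with hId
      have hImem : ∀ r : R, r ∈ I ↔ ∃ v, (r • x, v) ∈ G := by
        intro r
        simp only [hId, Submodule.mem_comap, Submodule.mem_map,
          LinearMap.toSpanSingleton_apply, LinearMap.fst_apply]
        constructor
        · rintro ⟨p, hp, hp1⟩
          exact ⟨p.2, by rwa [← hp1, Prod.mk.eta]⟩
        · rintro ⟨v, hv⟩
          exact ⟨(r • x, v), hv, rfl⟩
      have hpick : ∀ r : I, ∃ v, ((r : R) • x, v) ∈ G := fun r => (hImem r).mp r.2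
      set α0 : I → E := fun r => (hpick r).choose with hα0d
      have hα0spec : ∀ r : I, ((r : R) • x, α0 r) ∈ G := fun r => (hpick r).choose_spec
      have hadd : ∀ r s : I, α0 (r + s) = α0 r + α0 s := by
        intro r s
        refine huniq (((r + s : I) : R) • x) _ _ (hα0spec (r + s)) ?_
        have h3 := G.add_mem (hα0spec r) (hα0spec s)
        have h4 : ((r : R) • x, α0 r) + ((s : R) • x, α0 s)
            = (((r + s : I) : R) • x, α0 r + α0 s) := by
          rw [Prod.mk_add_mk]
          congr 1
          rw [Submodule.coe_add, add_smul]
        rwa [h4] at h3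
      have hsmul : ∀ (c : R) (r : I), α0 (c • r) = c • α0 r := by
        intro c r
        refine huniq (((c • r : I) : R) • x) _ _ (hα0spec (c • r)) ?_
        have h3 := G.smul_mem c (hα0spec r)
        have h4 : c • (((r : R)) • x, α0 r) = (((c • r : I) : R) • x, c • α0 r) := by
          rw [Prod.smul_mk]
          congr 1
          rw [SetLike.val_smul, smul_smul, smul_eq_mul]
        rwa [h4] at h3
      set α : I →ₗ[R] E :=
        { toFun := α0, map_add' := hadd,
          map_smul' := fun c r => by simpa using hsmul c r } with hαd
      obtain ⟨β, hβ⟩ := hEinj.out I.subtype Subtype.coe_injective α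
      set v0 := β 1 with hv0d
      have hv0spec : ∀ (r : R) (hr : r ∈ I), (r • x, r • v0) ∈ G := by
        intro r hr
        have h1 : r • v0 = α ⟨r, hr⟩ := by
          rw [hv0d, ← map_smul, smul_eq_mul, mul_one]
          exact hβ ⟨r, hr⟩
        rw [h1]
        exact hα0spec ⟨r, hr⟩
      obtain ⟨u1, hu1⟩ := htor v0
      obtain ⟨t, htc⟩ := hg (Submodule.span R {x}) (Submodule.fg_span_singleton x)
      set u := max t u1 with hud
      set J : Ideal R := I ⊔ (IsLocalRing.maximalIdeal R) ^ u with hJd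
      set δ : R →ₗ[k] k := g ∘ₗ toSmul (k := k) x - σ ∘ₗ toSmul (k := k) v0 with hδd
      have hδJ : ∀ r ∈ J, δ r = 0 := by
        intro r hr
        rw [hJd, Submodule.mem_sup] at hr
        obtain ⟨r1, hr1, r2, hr2, rfl⟩ := hr
        have e1 : δ r1 = 0 := by
          have hσg : σ (r1 • v0) = g (r1 • x) := hGS.2 _ (hv0spec r1 hr1)
          simp only [hδd, LinearMap.sub_apply, LinearMap.comp_apply, toSmul_apply]
          rw [hσg, sub_self]
        have e2 : δ r2 = 0 := by
          have hg0 : g (r2 • x) = 0 := htc _ (Submodule.smul_mem_smul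
            (Ideal.pow_le_pow_right (le_max_left _ _) hr2)
            (Submodule.mem_span_singleton_self x))
          have hσ0 : σ (r2 • v0) = 0 := by
            rw [hu1 r2 (Ideal.pow_le_pow_right (le_max_right _ _) hr2), map_zero]
          simp only [hδd, LinearMap.sub_apply, LinearMap.comp_apply, toSmul_apply]
          rw [hg0, hσ0, sub_zero]
        rw [map_add, e1, e2, add_zero]
      obtain ⟨w, hw1, hw2⟩ := claimA hEinj hcoef e he σ hσe J ⟨u, le_sup_right⟩ δ hδJ
      set v := v0 + w with hvd
      have hσrv : ∀ r : R, σ (r • v) = g (r • x) := by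
        intro r
        rw [hvd, smul_add, map_add, hw2 r]
        simp only [hδd, LinearMap.sub_apply, LinearMap.comp_apply, toSmul_apply]
        ring
      set G' : Submodule R (M × E) := G ⊔ Submodule.span R {(x, v)} with hG'd
      have hG'S : G' ∈ S := by
        constructor
        · intro z hz
          rw [hG'd, Submodule.mem_sup] at hz
          obtain ⟨p, hp, q, hq, hpq⟩ := hz
          obtain ⟨r, rfl⟩ := Submodule.mem_span_singleton.mp hq
          have h1 : p.1 + r • x = 0 := congrArg Prod.fst hpq
          have h2 : p.2 + r • v = z := congrArg Prod.snd hpq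
          have hnegp : (r • x, -p.2) ∈ G := by
            have h3 := G.neg_mem hp
            have h4 : -p = (r • x, -p.2) := by
              have h1' : p.1 = -(r • x) := eq_neg_of_add_eq_zero_left h1
              have h5 : -p = (-(p.1), -(p.2)) := rfl
              rw [h5, h1', neg_neg]
            rwa [h4] at h3
          have hrI : r ∈ I := (hImem r).mpr ⟨-p.2, hnegp⟩
          have h5 : r • v0 = -p.2 := huniq (r • x) _ _ (hv0spec r hrI) hnegp
          have h6 : r • w = 0 := hw1 r ((le_sup_left : I ≤ J) hrI)
          rw [← h2, hvd, smul_add, h5, h6, add_zero, add_neg_cancel]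
        · intro p' hp'
          rw [hG'd, Submodule.mem_sup] at hp'
          obtain ⟨p, hp, q, hq, rfl⟩ := hp'
          obtain ⟨r, rfl⟩ := Submodule.mem_span_singleton.mp hq
          show σ (p.2 + r • v) = g (p.1 + r • x)
          rw [map_add, map_add, hGS.2 p hp, hσrv r]
      have hle : G' ≤ G := hGmax.2 hG'S le_sup_left
      exact hx v (hle ((le_sup_right : Submodule.span R {(x, v)} ≤ G')
        (Submodule.mem_span_singleton_self _)))
    choose φ0 hφ0 using htotal
    have haddφ : ∀ a b : M, φ0 (a + b) = φ0 a + φ0 b := by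
      intro a b
      refine huniq (a + b) _ _ (hφ0 (a + b)) ?_
      have h3 := G.add_mem (hφ0 a) (hφ0 b)
      rwa [Prod.mk_add_mk] at h3
    have hsmulφ : ∀ (r : R) (a : M), φ0 (r • a) = r • φ0 a := by
      intro r a
      refine huniq (r • a) _ _ (hφ0 (r • a)) ?_
      have h3 := G.smul_mem r (hφ0 a)
      rwa [Prod.smul_mk] at h3
    refine ⟨{ toFun := φ0, map_add' := haddφ, map_smul' := hsmulφ }, ?_⟩
    intro x
    exact hGS.2 _ (hφ0 x)
  · -- (4)
    intro r φ x
    rw [LinearMap.smul_apply, φ.map_smul]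
  · -- (5)
    intro M' _ _ f φ x
    rfl
end

section
/- Let (R, m) be a Noetherian local ring with coefficient field k and E an R-injective hull of k. If M is an R-module with support equal to {m} (for instance, if M is Artinian), then Hom_R(M, E) ≅ Hom_k(M, k) as R-modules, where Hom_k(M,k) is the full k-linear dual with R-action (r·λ)(x) = λ(rx). -/
open IsLocalRing

section aux

variable {R : Type} [CommRing R] [IsNoetherianRing R] [IsLocalRing R]
  {k : Type} [Field k] [Algebra k R]
  {E : Type} [AddCommGroup E] [Module R E] [Module k E] [IsScalarTower k R E]

/-- Key injectivity lemma: if all σ(r • y) vanish then y = 0. -/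
private lemma lemA (e : E) (he : ∀ r : R, r • e = 0 ↔ r ∈ maximalIdeal R)
    (hess : ∀ N : Submodule R E, N ≠ ⊥ → N ⊓ Submodule.span R {e} ≠ ⊥)
    (σ : E →ₗ[k] k)
    (hσsoc : ∀ x : E, (∀ r ∈ maximalIdeal R, r • x = 0) → σ x = 0 → x = 0)
    (y : E) (hy : ∀ r : R, σ (r • y) = 0) : y = 0 := by
  by_contra hne
  have h1 : Submodule.span R {y} ≠ ⊥ := by
    simpa [Submodule.span_singleton_eq_bot] using hne
  obtain ⟨w, hw, hw0⟩ := (Submodule.ne_bot_iff _).1 (hess _ h1)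
  obtain ⟨hw1, hw2⟩ := Submodule.mem_inf.1 hw
  obtain ⟨r, hr⟩ := Submodule.mem_span_singleton.1 hw1
  obtain ⟨c, hc⟩ := Submodule.mem_span_singleton.1 hw2
  refine hw0 (hσsoc w ?_ ?_)
  · intro r' hr'
    rw [← hc, smul_smul]
    exact (he _).2 (Ideal.mul_mem_right c _ hr')
  · rw [← hr]; exact hy r

/-- Cyclic-module surjectivity: every k-linear functional on R vanishing on an ideal
containing a power of the maximal ideal is represented by an element of E. -/
private lemma lemC (hEinj : Module.Injective R E) (e : E)
    (he : ∀ r : R, r • e = 0 ↔ r ∈ maximalIdeal R)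
    (σ : E →ₗ[k] k) (hσe : σ e = 1)
    (hcoef : Function.Bijective ((residue R).comp (algebraMap k R)))
    (I : Ideal R) (hI : ∃ t, maximalIdeal R ^ t ≤ I)
    (h : R →ₗ[k] k) (hh : ∀ i ∈ I, h i = 0) :
    ∃ z : E, ∀ r : R, σ (r • z) = h r := by
  induction I using IsNoetherian.induction generalizing h with
  | hgt I IH =>
  by_cases hIR : (1 : R) ∈ I
  · refine ⟨0, fun r => ?_⟩
    have : h r = 0 := by
      have := hh _ (Ideal.mul_mem_left I r hIR)
      simpa using this
    simp [this]
  · obtain ⟨t, ht⟩ := hI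
    have hex : ∃ j, maximalIdeal R ^ j ≤ I := ⟨t, ht⟩
    classical
    have hj : maximalIdeal R ^ (Nat.find hex) ≤ I := Nat.find_spec hex
    have hj0 : Nat.find hex ≠ 0 := by
      intro h0
      rw [h0, pow_zero, Ideal.one_eq_top] at hj
      exact hIR (hj Submodule.mem_top)
    have hjlt : ¬ maximalIdeal R ^ (Nat.find hex - 1) ≤ I :=
      Nat.find_min hex (by omega)
    obtain ⟨s, hs1, hs2⟩ := SetLike.not_le_iff_exists.1 hjlt
    have hms : ∀ r ∈ maximalIdeal R, r * s ∈ I := by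
      intro r hr
      apply hj
      have hje : Nat.find hex = (Nat.find hex - 1) + 1 := by omega
      rw [hje, pow_succ, mul_comm r s]
      exact Ideal.mul_mem_mul hs1 hr
    -- construct z₀ with I • z₀ = 0 and s • z₀ = e, using injectivity of E
    set sbar : R ⧸ I := Submodule.Quotient.mk s with hsbar
    set τ : R →ₗ[R] R ⧸ I := LinearMap.toSpanSingleton R _ sbar with hτ
    have hτr : ∀ r : R, τ r = Submodule.Quotient.mk (r * s) := by
      intro r
      rw [hτ, LinearMap.toSpanSingleton_apply, hsbar, ← Submodule.Quotient.mk_smul,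
        smul_eq_mul]
    have hker : LinearMap.ker τ ≤ LinearMap.ker (LinearMap.toSpanSingleton R E e) := by
      intro r hr
      rw [LinearMap.mem_ker, hτr] at hr
      have hrs : r * s ∈ I := (Submodule.Quotient.mk_eq_zero I).1 hr
      rw [LinearMap.mem_ker, LinearMap.toSpanSingleton_apply]
      apply (he r).2
      by_contra hrm
      have hu : IsUnit r := by
        simpa [IsLocalRing.mem_maximalIdeal, mem_nonunits_iff, not_not] using hrm
      obtain ⟨u, hu⟩ := hu
      apply hs2
      have := Ideal.mul_mem_left I (↑u⁻¹) hrs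
      rwa [← mul_assoc, ← hu, Units.inv_mul, one_mul] at this
    set g0 : LinearMap.range τ →ₗ[R] E :=
      (Submodule.liftQ (LinearMap.ker τ) (LinearMap.toSpanSingleton R E e) hker).comp
        (LinearMap.quotKerEquivRange τ).symm.toLinearMap with hg0def
    have hg0 : ∀ r : R, g0 ⟨τ r, LinearMap.mem_range_self τ r⟩ = r • e := by
      intro r
      rw [hg0def, LinearMap.comp_apply, LinearEquiv.coe_toLinearMap,
        LinearMap.quotKerEquivRange_symm_apply_image, Submodule.mkQ_apply,
        Submodule.liftQ_apply, LinearMap.toSpanSingleton_apply]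
    obtain ⟨F, hF⟩ := hEinj.out (LinearMap.range τ).subtype
      (Submodule.injective_subtype _) g0
    set z0 : E := F (Submodule.Quotient.mk 1) with hz0def
    have hFr : ∀ r : R, F (Submodule.Quotient.mk (r * s)) = r • e := by
      intro r
      have := hF ⟨τ r, LinearMap.mem_range_self τ r⟩
      rw [hg0 r] at this
      rw [← hτr r]
      exact this
    have hsz0 : s • z0 = e := by
      rw [hz0def, ← map_smul, ← Submodule.Quotient.mk_smul, smul_eq_mul, mul_one]
      have := hFr 1
      rwa [one_mul, one_smul] at this
    have hIz0 : ∀ i ∈ I, i • z0 = 0 := by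
      intro i hi
      rw [hz0def, ← map_smul, ← Submodule.Quotient.mk_smul, smul_eq_mul, mul_one]
      rw [(Submodule.Quotient.mk_eq_zero I).2 hi, map_zero]
    -- the functional r ↦ σ (r • z₀)
    set lam : R →ₗ[k] k :=
      { toFun := fun r => σ (r • z0)
        map_add' := fun a b => by
          show σ ((a + b) • z0) = σ (a • z0) + σ (b • z0)
          rw [add_smul, map_add]
        map_smul' := fun a r => by
          show σ ((a • r) • z0) = a • σ (r • z0)
          rw [smul_assoc, map_smul] } with hlam
    set h' : R →ₗ[k] k := h - (h s) • lam with hh'def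
    -- h' vanishes on J := I ⊔ span {s}
    set J : Ideal R := I ⊔ Submodule.span R {s} with hJ
    have hsJ : s ∈ J := by
      rw [hJ]
      exact Submodule.mem_sup_right (Submodule.mem_span_singleton_self s)
    have hJgt : I < J := lt_of_le_of_ne le_sup_left (fun hEq => hs2 (hEq ▸ hsJ))
    have hh' : ∀ w ∈ J, h' w = 0 := by
      intro w hw
      obtain ⟨i, hi, v, hv, rfl⟩ := Submodule.mem_sup.1 hw
      obtain ⟨r, rfl⟩ := Submodule.mem_span_singleton.1 hv
      rw [smul_eq_mul]
      have hval : ∀ u : R, h' u = h u - h s * σ (u • z0) := by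
        intro u
        simp only [hh'def, hlam, LinearMap.sub_apply, LinearMap.smul_apply,
          LinearMap.coe_mk, AddHom.coe_mk, smul_eq_mul]
      rw [map_add, hval i, hval (r * s), hh i hi, hIz0 i hi]
      -- decompose r = algebraMap a + r' with r' in the maximal ideal
      obtain ⟨a, ha⟩ := hcoef.2 (residue R r)
      set r' : R := r - algebraMap k R a with hr'
      have hr'm : r' ∈ maximalIdeal R := by
        have : residue R r' = 0 := by
          rw [hr', map_sub]
          rw [RingHom.comp_apply] at ha
          rw [ha, sub_self]
        exact (Ideal.Quotient.eq_zero_iff_mem).1 this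
      have hre : r • e = a • e := by
        have : r = algebraMap k R a + r' := by rw [hr']; ring
        rw [this, add_smul, (he r').2 hr'm, add_zero, algebraMap_smul]
      have hrs : h (r * s) = a * h s := by
        have hdec : r * s = a • s + r' * s := by
          rw [Algebra.smul_def, hr']; ring
        rw [hdec, map_add, map_smul, smul_eq_mul, hh _ (hms r' hr'm), add_zero]
      have hσrs : σ ((r * s) • z0) = a := by
        rw [mul_smul, hsz0, hre, map_smul, hσe, smul_eq_mul, mul_one]
      rw [hrs, hσrs, map_zero]
      ring
    obtain ⟨z', hz'⟩ := IH J hJgt ⟨t, le_trans ht le_sup_left⟩ h' hh'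
    refine ⟨algebraMap k R (h s) • z0 + z', fun r => ?_⟩
    rw [smul_add, map_add, hz' r]
    have h1 : r • algebraMap k R (h s) • z0 = (h s) • (r • z0) := by
      rw [smul_comm, algebraMap_smul]
    rw [h1, map_smul, smul_eq_mul]
    have hval : h' r = h r - h s * σ (r • z0) := by
      simp only [hh'def, hlam, LinearMap.sub_apply, LinearMap.smul_apply,
        LinearMap.coe_mk, AddHom.coe_mk, smul_eq_mul]
    rw [hval]
    ring

end aux

theorem stmt10 {R : Type} [CommRing R] [IsNoetherianRing R] [IsLocalRing R]
    (k : Type) [Field k] [Algebra k R]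
    (hcoef : Function.Bijective ((IsLocalRing.residue R).comp (algebraMap k R)))
    (E : Type) [AddCommGroup E] [Module R E] [Module k E] [IsScalarTower k R E]
    (hEinj : Module.Injective R E) (e : E)
    (he : ∀ r : R, r • e = 0 ↔ r ∈ IsLocalRing.maximalIdeal R)
    (hess : ∀ N : Submodule R E, N ≠ ⊥ → N ⊓ Submodule.span R {e} ≠ ⊥)
    (σ : E →ₗ[k] k) (hσe : σ e = 1)
    (hσsoc : ∀ x : E, (∀ r ∈ IsLocalRing.maximalIdeal R, r • x = 0) → σ x = 0 → x = 0)
    (M : Type) [AddCommGroup M] [Module R M] [Module k M] [IsScalarTower k R M]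
    -- Supp(M) = {m} : every element of M is annihilated by a power of m
    (hsupp : ∀ x : M, ∃ t : ℕ, ∀ r ∈ (IsLocalRing.maximalIdeal R) ^ t, r • x = 0) :
    -- Φ_M : Hom_R(M,E) → Hom_k(M,k) is injective, ...
    (∀ φ ψ : M →ₗ[R] E, (∀ x : M, σ (φ x) = σ (ψ x)) → φ = ψ) ∧
    -- ... surjective onto the full k-linear dual, ...
    (∀ g : M →ₗ[k] k, ∃ φ : M →ₗ[R] E, ∀ x : M, σ (φ x) = g x) ∧
    -- ... and R-linear for the action (r·λ)(x) = λ(r·x)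
    (∀ (r : R) (φ : M →ₗ[R] E) (x : M), σ ((r • φ) x) = σ (φ (r • x))) := by
  classical
  refine ⟨?_, ?_, ?_⟩
  · -- injectivity
    intro φ ψ hσφψ
    ext x
    have : φ x - ψ x = 0 := by
      apply lemA e he hess σ hσsoc
      intro r
      rw [smul_sub, map_sub, ← map_smul φ, ← map_smul ψ, hσφψ (r • x), sub_self]
    exact sub_eq_zero.mp this
  · -- surjectivity
    intro g
    -- for each x : M, get z x representing r ↦ g (r • x)
    have hz : ∀ x : M, ∃ z : E, ∀ r : R, σ (r • z) = g (r • x) := by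
      intro x
      obtain ⟨t, ht⟩ := hsupp x
      refine lemC hEinj e he σ hσe hcoef
        (LinearMap.ker (LinearMap.toSpanSingleton R M x)) ⟨t, fun r hr => ?_⟩
        { toFun := fun r => g (r • x)
          map_add' := fun a b => by
            show g ((a + b) • x) = g (a • x) + g (b • x)
            rw [add_smul, map_add]
          map_smul' := fun a r => by
            show g ((a • r) • x) = a • g (r • x)
            rw [smul_assoc, map_smul] }
        (fun i hi => ?_)
      · rw [LinearMap.mem_ker, LinearMap.toSpanSingleton_apply]
        exact ht r hr
      · rw [LinearMap.mem_ker, LinearMap.toSpanSingleton_apply] at hi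
        show g (i • x) = 0
        rw [hi, map_zero]
    choose z hzz using hz
    set π : (M →₀ R) →ₗ[R] M := Finsupp.linearCombination R _root_.id with hπ
    have hπs : Function.Surjective π := Finsupp.linearCombination_id_surjective R M
    set ψ : (M →₀ R) →ₗ[R] E := Finsupp.linearCombination R z with hψdef
    have hkey : ∀ f : M →₀ R, σ (ψ f) = g (π f) := by
      intro f
      rw [hψdef, hπ, Finsupp.linearCombination_apply, Finsupp.linearCombination_apply]
      rw [map_finsuppSum, map_finsuppSum]
      exact Finsupp.sum_congr (fun x _ => hzz x _)
    have hker : LinearMap.ker π ≤ LinearMap.ker ψ := by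
      intro f hf
      rw [LinearMap.mem_ker] at hf ⊢
      apply lemA e he hess σ hσsoc
      intro r
      rw [← map_smul, hkey, map_smul, hf, smul_zero, map_zero]
    set eq := π.quotKerEquivOfSurjective hπs with heq
    have heqmk : ∀ f : M →₀ R, eq (Submodule.Quotient.mk f) = π f := fun f => rfl
    refine ⟨(Submodule.liftQ (LinearMap.ker π) ψ hker).comp eq.symm.toLinearMap,
      fun x => ?_⟩
    have hfx : π (Finsupp.single x 1) = x := by
      rw [hπ, Finsupp.linearCombination_single, one_smul, _root_.id]
    have hsymm : eq.symm x = Submodule.Quotient.mk (Finsupp.single x 1) := by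
      rw [LinearEquiv.symm_apply_eq, heqmk, hfx]
    rw [LinearMap.comp_apply, LinearEquiv.coe_toLinearMap, hsymm,
      Submodule.liftQ_apply, hkey, hfx]
  · -- R-linearity
    intro r φ x
    rw [LinearMap.smul_apply, ← map_smul]
end

section
/- Let (R, m) be a Noetherian complete local ring with coefficient field k. Then for every j ≥ 0, the R-module D^j(R) of k-linear differential operators on R of order at most j is finitely generated. -/
/-!
STATEMENT 14: Let (R, m) be a Noetherian complete local ring with coefficient field k.
Then for every j ≥ 0, the R-module D^j(R) of k-linear differential operators on R of
order at most j is finitely generated.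

Differential operators are encoded recursively (following EGA): operators of order 0 are
multiplications by elements of R, and `δ` has order ≤ j+1 iff `[δ, r]` has order ≤ j for
all `r : R`.  Finite generation of `D^j(R)` is expressed by exhibiting a finite set of
differential operators of order ≤ j whose `R`-span (for the action of `R` on
`R →ₗ[k] R` by post-multiplication) contains all differential operators of order ≤ j.
-/

/-- Multiplication by `r : R` as a `k`-linear endomorphism of `R`. -/
noncomputable def mulByLinearMap (k : Type*) {R : Type*} [CommRing R] [CommRing k]
    [Algebra k R] (r : R) : R →ₗ[k] R :=
  (LinearMap.lsmul R R r).restrictScalars k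

/-- `IsDiffOp k R j δ` : the `k`-linear endomorphism `δ` of `R` is a differential
operator of order at most `j` (recursive commutator definition). -/
noncomputable def IsDiffOp (k R : Type*) [CommRing R] [CommRing k] [Algebra k R] :
    ℕ → (R →ₗ[k] R) → Prop
  | 0, δ => ∃ r : R, δ = mulByLinearMap k r
  | (j + 1), δ => ∀ r : R,
      IsDiffOp k R j (δ ∘ₗ mulByLinearMap k r - mulByLinearMap k r ∘ₗ δ)

section Basic
variable {k R : Type*} [CommRing k] [CommRing R] [Algebra k R]

lemma mulLinearMap_apply (r x : R) : mulByLinearMap k r x = r * x := rfl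

lemma mulLinearMap_add (r s : R) :
    mulByLinearMap k (R := R) (r + s) = mulByLinearMap k r + mulByLinearMap k s := by
  ext x; simp [mulLinearMap_apply, add_mul]

lemma mulLinearMap_zero : mulByLinearMap k (R := R) 0 = 0 := by
  ext x; simp [mulLinearMap_apply]

lemma smul_mulLinearMap (r t : R) :
    r • mulByLinearMap k (R := R) t = mulByLinearMap k (r * t) := by
  ext x; simp [mulLinearMap_apply, mul_assoc]

/-- The commutator of `δ` with multiplication by `r`. -/
noncomputable def commOp (δ : R →ₗ[k] R) (r : R) : R →ₗ[k] R :=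
  δ ∘ₗ mulByLinearMap k r - mulByLinearMap k r ∘ₗ δ

lemma commOp_apply (δ : R →ₗ[k] R) (r x : R) :
    commOp δ r x = δ (r * x) - r * δ x := rfl

lemma isDiffOp_succ_iff (j : ℕ) (δ : R →ₗ[k] R) :
    IsDiffOp k R (j + 1) δ ↔ ∀ r : R, IsDiffOp k R j (commOp δ r) := Iff.rfl

lemma commOp_add (δ ε : R →ₗ[k] R) (r : R) :
    commOp (δ + ε) r = commOp δ r + commOp ε r := by
  unfold commOp
  rw [LinearMap.add_comp, LinearMap.comp_add]
  abel

lemma commOp_smul (c : R) (δ : R →ₗ[k] R) (r : R) :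
    commOp (c • δ) r = c • commOp δ r := by
  ext x
  simp only [commOp_apply, LinearMap.smul_apply, smul_eq_mul, mul_sub]
  ring

lemma commOp_zero (r : R) : commOp (0 : R →ₗ[k] R) r = 0 := by
  ext x; simp [commOp_apply]

lemma isDiffOp_zero (j : ℕ) : IsDiffOp k R j 0 := by
  induction j with
  | zero => exact ⟨0, mulLinearMap_zero.symm⟩
  | succ j ih =>
      intro r
      show IsDiffOp k R j (commOp 0 r)
      rw [commOp_zero]; exact ih

lemma isDiffOp_add {j : ℕ} {δ ε : R →ₗ[k] R} (hδ : IsDiffOp k R j δ)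
    (hε : IsDiffOp k R j ε) : IsDiffOp k R j (δ + ε) := by
  induction j generalizing δ ε with
  | zero =>
      obtain ⟨r, rfl⟩ := hδ; obtain ⟨s, rfl⟩ := hε
      exact ⟨r + s, (mulLinearMap_add r s).symm⟩
  | succ j ih =>
      intro r
      show IsDiffOp k R j (commOp (δ + ε) r)
      rw [commOp_add]
      exact ih (hδ r) (hε r)

lemma isDiffOp_smul {j : ℕ} (c : R) {δ : R →ₗ[k] R} (hδ : IsDiffOp k R j δ) :
    IsDiffOp k R j (c • δ) := by
  induction j generalizing δ with
  | zero =>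
      obtain ⟨r, rfl⟩ := hδ
      exact ⟨c * r, smul_mulLinearMap (k := k) c r⟩
  | succ j ih =>
      intro r
      show IsDiffOp k R j (commOp (c • δ) r)
      rw [commOp_smul]
      exact ih (hδ r)

end Basic

section Steps
variable {k R : Type*} [CommRing k] [CommRing R] [Algebra k R]

/-- Step A: a differential operator of order `≤ j` vanishing on all products of at most
`j` of the `x i`'s vanishes on all products of the `x i`'s. -/
lemma vanish_on_monomials {n : ℕ} (x : Fin n → R) :
    ∀ (j : ℕ) (δ : R →ₗ[k] R), IsDiffOp k R j δ →
      (∀ l : List (Fin n), l.length ≤ j → δ (l.map x).prod = 0) →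
      ∀ l : List (Fin n), δ (l.map x).prod = 0 := by
  intro j
  induction j with
  | zero =>
      rintro δ ⟨r, rfl⟩ h0 l
      have h1 : r = 0 := by
        have := h0 [] (by simp)
        simpa [mulLinearMap_apply] using this
      simp [h1, mulLinearMap_apply]
  | succ j ih =>
      intro δ hδ h0 l
      induction l with
      | nil => exact h0 [] (by simp)
      | cons i l ihl =>
          have hcomm : ∀ l' : List (Fin n), δ ((x i) * (l'.map x).prod)
              = commOp δ (x i) ((l'.map x).prod) + (x i) * δ ((l'.map x).prod) := by
            intro l'; rw [commOp_apply]; ring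
          have hδi : IsDiffOp k R j (commOp δ (x i)) := hδ (x i)
          have h0i : ∀ l' : List (Fin n), l'.length ≤ j →
              commOp δ (x i) ((l'.map x).prod) = 0 := by
            intro l' hl'
            rw [commOp_apply]
            have h1 : δ (((i :: l').map x).prod) = 0 := h0 _ (by simpa using hl')
            have h2 : δ ((l'.map x).prod) = 0 := h0 _ (le_trans hl' (Nat.le_succ j))
            simp only [List.map_cons, List.prod_cons] at h1
            rw [h1, h2, mul_zero, sub_zero]
          have hvan := ih (commOp δ (x i)) hδi h0i
          simp only [List.map_cons, List.prod_cons]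
          rw [hcomm l, hvan l, ihl, mul_zero, add_zero]

/-- Step B: continuity of differential operators. -/
lemma diffOp_continuity (I : Ideal R) :
    ∀ (j : ℕ) (δ : R →ₗ[k] R), IsDiffOp k R j δ →
      ∀ (N : ℕ) (a : R), a ∈ I ^ (j + N) → δ a ∈ I ^ N := by
  intro j
  induction j with
  | zero =>
      rintro δ ⟨r, rfl⟩ N a ha
      rw [mulLinearMap_apply]
      exact Ideal.mul_mem_left _ r (by simpa using ha)
  | succ j ih =>
      intro δ hδ N
      induction N with
      | zero => intro a _; simp
      | succ N ihN =>
          intro a ha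
          have ha : a ∈ I ^ (j + 1 + N) * I := by rw [← pow_succ]; exact ha
          refine Submodule.mul_induction_on ha ?_ ?_
          · intro b hb c hc
            have h1 : δ (b * c) = c * δ b + commOp δ c b := by
              rw [commOp_apply, mul_comm b c]; ring
            rw [h1]
            have hδb : δ b ∈ I ^ N := ihN b hb
            have hterm1 : c * δ b ∈ I ^ (N + 1) := by
              rw [pow_succ, mul_comm c (δ b)]
              exact Ideal.mul_mem_mul hδb hc
            have hb' : b ∈ I ^ (j + (N + 1)) := by
              have : j + 1 + N = j + (N + 1) := by omega
              rwa [this] at hb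
            have hterm2 : commOp δ c b ∈ I ^ (N + 1) := ih (commOp δ c) (hδ c) (N + 1) b hb'
            exact Ideal.add_mem _ hterm1 hterm2
          · intro u v hu hv
            rw [map_add]
            exact Ideal.add_mem _ hu hv
end Steps

section Density
variable {k R : Type*} [CommRing k] [CommRing R] [Algebra k R]

/-- The `k`-span of all monomials in the `x i`'s. -/
noncomputable def monSpan {n : ℕ} (x : Fin n → R) : Submodule k R :=
  Submodule.span k (Set.range fun l : List (Fin n) => (l.map x).prod)

lemma one_mem_monSpan {n : ℕ} (x : Fin n → R) : (1 : R) ∈ monSpan (k := k) x :=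
  Submodule.subset_span ⟨[], by simp⟩

lemma monSpan_mul_gen {n : ℕ} (x : Fin n → R) (i : Fin n) {a : R}
    (ha : a ∈ monSpan (k := k) x) : a * x i ∈ monSpan (k := k) x := by
  refine Submodule.span_induction (p := fun a _ => a * x i ∈ monSpan (k := k) x)
    ?_ ?_ ?_ ?_ ha
  · rintro _ ⟨l, rfl⟩
    refine Submodule.subset_span ⟨l ++ [i], ?_⟩
    simp
  · simp only [zero_mul]; exact Submodule.zero_mem _
  · intro u v _ _ hu hv
    rw [add_mul]; exact Submodule.add_mem _ hu hv
  · intro c u _ hu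
    rw [smul_mul_assoc]; exact Submodule.smul_mem _ c hu

lemma algebraMap_mem_monSpan {n : ℕ} (x : Fin n → R) (c : k) :
    algebraMap k R c ∈ monSpan (k := k) x := by
  have : algebraMap k R c = c • (1 : R) := by rw [Algebra.smul_def, mul_one]
  rw [this]
  exact Submodule.smul_mem _ c (one_mem_monSpan x)

/-- Step C, inner approximation: every element of `I^N` is congruent mod `I^(N+1)` to an
element of the monomial span lying in `I^N`. -/
lemma approx_step {n : ℕ} (x : Fin n → R) (I : Ideal R)
    (hx : Ideal.span (Set.range x) = I)
    (hres : ∀ s : R, ∃ c : k, s - algebraMap k R c ∈ I) :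
    ∀ N : ℕ, ∀ s ∈ I ^ N, ∃ a, a ∈ monSpan (k := k) x ∧ a ∈ I ^ N ∧ s - a ∈ I ^ (N + 1) := by
  intro N
  induction N with
  | zero =>
      intro s _
      obtain ⟨c, hc⟩ := hres s
      exact ⟨algebraMap k R c, algebraMap_mem_monSpan x c,
        by simp [Ideal.one_eq_top], by simpa using hc⟩
  | succ N ihN =>
      intro s hs
      have hs' : s ∈ I ^ N * I := by rw [← pow_succ]; exact hs
      refine Submodule.mul_induction_on hs' ?_ ?_
      · intro b hb c hc
        rw [← hx] at hc
        revert b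
        refine Submodule.span_induction
          (p := fun c _ => ∀ b ∈ I ^ N, ∃ a, a ∈ monSpan (k := k) x ∧ a ∈ I ^ (N + 1) ∧
            b * c - a ∈ I ^ (N + 1 + 1)) ?_ ?_ ?_ ?_ hc
        · rintro _ ⟨i, rfl⟩ b hb
          obtain ⟨ab, habA, habI, hdiff⟩ := ihN b hb
          have hxi : x i ∈ I := by
            rw [← hx]; exact Ideal.subset_span ⟨i, rfl⟩
          refine ⟨ab * x i, monSpan_mul_gen x i habA, ?_, ?_⟩
          · rw [pow_succ]; exact Ideal.mul_mem_mul habI hxi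
          · have : b * x i - ab * x i = (b - ab) * x i := by ring
            rw [this, pow_succ]
            exact Ideal.mul_mem_mul hdiff hxi
        · intro b _
          exact ⟨0, Submodule.zero_mem _, Submodule.zero_mem _, by simpa using Submodule.zero_mem _⟩
        · intro c₁ c₂ _ _ h₁ h₂ b hb
          obtain ⟨a₁, hA₁, hI₁, hd₁⟩ := h₁ b hb
          obtain ⟨a₂, hA₂, hI₂, hd₂⟩ := h₂ b hb
          refine ⟨a₁ + a₂, Submodule.add_mem _ hA₁ hA₂, Submodule.add_mem _ hI₁ hI₂, ?_⟩
          have : b * (c₁ + c₂) - (a₁ + a₂) = (b * c₁ - a₁) + (b * c₂ - a₂) := by ring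
          rw [this]; exact Submodule.add_mem _ hd₁ hd₂
        · intro r c _ h b hb
          obtain ⟨a, hA, hI, hd⟩ := h (r * b) (Ideal.mul_mem_left _ r hb)
          refine ⟨a, hA, hI, ?_⟩
          have : b * (r • c) - a = (r * b) * c - a := by
            rw [smul_eq_mul]; ring
          rw [this]; exact hd
      · intro u v hu hv
        obtain ⟨a₁, hA₁, hI₁, hd₁⟩ := hu
        obtain ⟨a₂, hA₂, hI₂, hd₂⟩ := hv
        refine ⟨a₁ + a₂, Submodule.add_mem _ hA₁ hA₂, Submodule.add_mem _ hI₁ hI₂, ?_⟩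
        have : u + v - (a₁ + a₂) = (u - a₁) + (v - a₂) := by ring
        rw [this]; exact Submodule.add_mem _ hd₁ hd₂

/-- Step C: density of the monomial span. -/
lemma density {n : ℕ} (x : Fin n → R) (I : Ideal R)
    (hx : Ideal.span (Set.range x) = I)
    (hres : ∀ s : R, ∃ c : k, s - algebraMap k R c ∈ I) :
    ∀ (r : R) (N : ℕ), ∃ a ∈ monSpan (k := k) x, r - a ∈ I ^ N := by
  intro r N
  induction N with
  | zero => exact ⟨0, Submodule.zero_mem _, by simp [Ideal.one_eq_top]⟩
  | succ N ihN =>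
      obtain ⟨a₁, hA₁, hd₁⟩ := ihN
      obtain ⟨a₂, hA₂, _, hd₂⟩ := approx_step x I hx hres N (r - a₁) hd₁
      exact ⟨a₁ + a₂, Submodule.add_mem _ hA₁ hA₂, by rwa [← sub_sub]⟩

end Density

section Final
variable {k R : Type*} [CommRing k] [CommRing R] [Algebra k R]

lemma vanish_on_monSpan {n : ℕ} (x : Fin n → R) (δ : R →ₗ[k] R)
    (hvan : ∀ l : List (Fin n), δ ((l.map x).prod) = 0) :
    ∀ a ∈ monSpan (k := k) x, δ a = 0 := by
  intro a ha
  refine Submodule.span_induction (p := fun a _ => δ a = 0) ?_ ?_ ?_ ?_ ha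
  · rintro _ ⟨l, rfl⟩; exact hvan l
  · simp
  · intro u v _ _ hu hv; rw [map_add, hu, hv, add_zero]
  · intro c u _ hu; rw [map_smul, hu, smul_zero]

lemma exists_fn_of_list {n : ℕ} (x : Fin n → R) :
    ∀ (j : ℕ) (l : List (Fin n)), l.length ≤ j →
      ∃ f : Fin j → Option (Fin n), (∏ i, (f i).elim 1 x) = (l.map x).prod := by
  intro j
  induction j with
  | zero =>
      intro l hl
      rw [Nat.le_zero, List.length_eq_zero_iff] at hl
      subst hl
      exact ⟨fun i => i.elim0, by simp⟩
  | succ j ih =>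
      intro l hl
      cases l with
      | nil => exact ⟨fun _ => none, by simp⟩
      | cons a l =>
          obtain ⟨f', hf'⟩ := ih l (by simpa using hl)
          refine ⟨Fin.cases (some a) f', ?_⟩
          rw [Fin.prod_univ_succ]
          simp only [Fin.cases_zero, Fin.cases_succ, List.map_cons, List.prod_cons]
          rw [show ((some a).elim 1 x : R) = x a from rfl, hf']

/-- Evaluation at a point as an `R`-linear map. -/
noncomputable def evalAt (m : R) : (R →ₗ[k] R) →ₗ[R] R where
  toFun δ := δ m
  map_add' _ _ := rfl
  map_smul' _ _ := rfl

end Final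

theorem stmt14 {R : Type*} [CommRing R] [IsNoetherianRing R] [IsLocalRing R]
    [IsAdicComplete (IsLocalRing.maximalIdeal R) R]
    (k : Type*) [Field k] [Algebra k R]
    -- k is a coefficient field: it maps isomorphically onto the residue field
    (hcoef : Function.Bijective ((IsLocalRing.residue R).comp (algebraMap k R)))
    (j : ℕ) :
    ∃ S : Finset (R →ₗ[k] R),
      (∀ δ ∈ S, IsDiffOp k R j δ) ∧
      ∀ δ : R →ₗ[k] R, IsDiffOp k R j δ →
        δ ∈ Submodule.span R (S : Set (R →ₗ[k] R)) := by
  classical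
  set I := IsLocalRing.maximalIdeal R with hI
  -- generators of the maximal ideal
  obtain ⟨n, x, hx⟩ := Submodule.fg_iff_exists_fin_generating_family.mp
    (IsNoetherian.noetherian I)
  -- surjectivity of the coefficient field onto the residue field
  have hres : ∀ s : R, ∃ c : k, s - algebraMap k R c ∈ I := by
    intro s
    obtain ⟨c, hc⟩ := hcoef.2 (IsLocalRing.residue R s)
    refine ⟨c, ?_⟩
    have : IsLocalRing.residue R (s - algebraMap k R c) = 0 := by
      rw [map_sub]
      rw [show IsLocalRing.residue R (algebraMap k R c)
        = ((IsLocalRing.residue R).comp (algebraMap k R)) c from rfl, hc, sub_self]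
    exact Ideal.Quotient.eq_zero_iff_mem.mp this
  -- the submodule of differential operators of order ≤ j
  set D : Submodule R (R →ₗ[k] R) :=
    { carrier := {δ | IsDiffOp k R j δ}
      add_mem' := fun h1 h2 => isDiffOp_add h1 h2
      zero_mem' := isDiffOp_zero j
      smul_mem' := fun c δ h => isDiffOp_smul c h } with hD
  -- evaluation on monomials of degree ≤ j
  set E : (R →ₗ[k] R) →ₗ[R] ((Fin j → Option (Fin n)) → R) :=
    LinearMap.pi (fun f => evalAt (∏ i, ((f i).elim 1 x : R))) with hE
  set φ : D →ₗ[R] ((Fin j → Option (Fin n)) → R) := E ∘ₗ D.subtype with hφ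
  -- injectivity of φ
  have hker : ∀ δ : D, φ δ = 0 → δ = 0 := by
    rintro ⟨δ, hδ⟩ h0
    have hmono : ∀ f : Fin j → Option (Fin n), δ (∏ i, ((f i).elim 1 x : R)) = 0 := by
      intro f
      exact congrFun h0 f
    have hlist : ∀ l : List (Fin n), l.length ≤ j → δ ((l.map x).prod) = 0 := by
      intro l hl
      obtain ⟨f, hf⟩ := exists_fn_of_list x j l hl
      rw [← hf]; exact hmono f
    have hall : ∀ l : List (Fin n), δ ((l.map x).prod) = 0 :=
      vanish_on_monomials x j δ hδ hlist
    have hspan : ∀ a ∈ monSpan (k := k) x, δ a = 0 := vanish_on_monSpan x δ hall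
    have hzero : ∀ r : R, δ r = 0 := by
      intro r
      refine IsHausdorff.haus (inferInstance : IsHausdorff I R) (δ r) ?_
      intro N
      rw [SModEq.zero, smul_eq_mul, Ideal.mul_top]
      obtain ⟨a, haA, hd⟩ := density x I hx hres r (j + N)
      have h1 : δ r = δ a + δ (r - a) := by rw [← map_add]; ring_nf
      rw [h1, hspan a haA, zero_add]
      exact diffOp_continuity I j δ hδ N (r - a) hd
    apply Subtype.ext
    exact LinearMap.ext hzero
  have hinj : Function.Injective φ := by
    intro a b hab
    exact sub_eq_zero.mp (hker (a - b) ((φ.map_sub a b).trans (by rw [hab, sub_self])))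
  haveI : IsNoetherian R ((Fin j → Option (Fin n)) → R) := inferInstance
  haveI : IsNoetherian R D := isNoetherian_of_injective φ hinj
  have hfg : D.FG := (Submodule.fg_top D).mp (IsNoetherian.noetherian ⊤)
  obtain ⟨S, hS⟩ := hfg
  refine ⟨S, ?_, ?_⟩
  · intro δ hδS
    have : δ ∈ D := hS ▸ Submodule.subset_span hδS
    exact this
  · intro δ hδ
    have : δ ∈ D := hδ
    rwa [hS]
end

section
/- Let k be a field and {U_i}_{i∈ℕ} an inverse system of k-vector spaces with transition maps f_{ji}: U_j → U_i for i ≤ j. Suppose that {U_i} satisfies the Mittag-Leffler condition and that the inverse limit lim_i (U_i^∨∨) of the double-dual inverse system (with transition maps f_{ji}^∨∨) is a finite-dimensional k-vector space. Then lim_i U_i ≅ lim_i (U_i^∨∨) as k-vector spaces. -/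
/-!
STATEMENT 19: Let k be a field and {U_i}_{i∈ℕ} an inverse system of k-vector spaces with
transition maps f_{ji}: U_j → U_i for i ≤ j.  Suppose that {U_i} satisfies the
Mittag-Leffler condition and that the inverse limit lim_i (U_i^∨∨) of the double-dual
inverse system (with transition maps f_{ji}^∨∨) is a finite-dimensional k-vector space.
Then lim_i U_i ≅ lim_i (U_i^∨∨) as k-vector spaces.
-/

noncomputable section

/-- The inverse limit of an inverse system of `k`-vector spaces indexed by `ℕ`,
realized as the submodule of compatible families in the product. -/
def invLimit (k : Type) [Field k] (U : ℕ → Type) [∀ i, AddCommGroup (U i)]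
    [∀ i, Module k (U i)] (f : ∀ i j, i ≤ j → (U j →ₗ[k] U i)) :
    Submodule k (∀ i, U i) where
  carrier := {x | ∀ (i j : ℕ) (h : i ≤ j), f i j h (x j) = x i}
  add_mem' := by
    intro a b ha hb i j h
    simp [ha i j h, hb i j h]
  zero_mem' := by intro i j h; simp
  smul_mem' := by
    intro c a ha i j h
    simp [ha i j h]

/-- The Mittag-Leffler condition for an inverse system indexed by `ℕ`: for each `ℓ`
the descending chain of images of the transition maps in `U ℓ` is stationary. -/
def MittagLeffler (k : Type) [Field k] (U : ℕ → Type) [∀ i, AddCommGroup (U i)]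
    [∀ i, Module k (U i)] (f : ∀ i j, i ≤ j → (U j →ₗ[k] U i)) : Prop :=
  ∀ ℓ : ℕ, ∃ s : ℕ, ∀ t : ℕ, s ≤ t →
    LinearMap.range (f ℓ (ℓ + t) (Nat.le_add_right ℓ t)) =
    LinearMap.range (f ℓ (ℓ + s) (Nat.le_add_right ℓ s))

theorem lift_mem_invLimit (k : Type) [Field k] (U : ℕ → Type) [∀ i, AddCommGroup (U i)]
    [∀ i, Module k (U i)] (f : ∀ i j, i ≤ j → (U j →ₗ[k] U i))
    (hid : ∀ i, f i i le_rfl = LinearMap.id)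
    (hcomp : ∀ (i j l : ℕ) (hij : i ≤ j) (hjl : j ≤ l),
      (f i j hij) ∘ₗ (f j l hjl) = f i l (hij.trans hjl))
    (S : ∀ n, Submodule k (U n))
    (hsurj : ∀ n, ∀ v ∈ S n, ∃ u ∈ S (n + 1), f n (n + 1) (Nat.le_succ n) u = v)
    (i : ℕ) (w : U i) (hw : w ∈ S i) :
    ∃ x ∈ invLimit k U f, x i = w := by
  let c : ∀ n : ℕ, {u : U (i + n) // u ∈ S (i + n)} := fun n =>
    Nat.rec ⟨w, hw⟩
      (fun n p => ⟨(hsurj (i + n) p.1 p.2).choose, (hsurj (i + n) p.1 p.2).choose_spec.1⟩) n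
  have cstep : ∀ n : ℕ, f (i + n) (i + (n + 1)) (Nat.le_succ _) (c (n + 1)).1 = (c n).1 :=
    fun n => (hsurj (i + n) (c n).1 (c n).2).choose_spec.2
  have chain : ∀ (m n : ℕ) (h : n ≤ m) (hle : i + n ≤ i + m),
      f (i + n) (i + m) hle (c m).1 = (c n).1 := by
    intro m
    induction m with
    | zero =>
      intro n h hle
      interval_cases n
      rw [hid]; rfl
    | succ m ih =>
      intro n h hle
      rcases Nat.lt_or_ge n (m + 1) with h' | h'
      · have hnm : n ≤ m := Nat.lt_succ_iff.mp h'
        have : f (i + n) (i + (m + 1)) hle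
            = (f (i + n) (i + m) (by omega)) ∘ₗ (f (i + m) (i + (m + 1)) (Nat.le_succ _)) :=
          (hcomp _ _ _ _ _).symm
        rw [this, LinearMap.comp_apply, cstep m, ih n hnm (by omega)]
      · have : n = m + 1 := le_antisymm h h'
        subst this
        rw [hid]; rfl
  refine ⟨fun m => f m (i + (m - i)) (by omega) (c (m - i)).1, ?_, ?_⟩
  · intro a b hab
    have h1 : f a b hab (f b (i + (b - i)) (by omega) (c (b - i)).1)
        = f a (i + (b - i)) (by omega) (c (b - i)).1 := by
      rw [← hcomp a b (i + (b - i)) hab (by omega)]; rfl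
    rw [h1]
    have h2 : f a (i + (b - i)) (by omega)
        = (f a (i + (a - i)) (by omega)) ∘ₗ (f (i + (a - i)) (i + (b - i)) (by omega)) :=
      (hcomp _ _ _ _ _).symm
    rw [h2, LinearMap.comp_apply, chain (b - i) (a - i) (by omega) (by omega)]
  · have h0 : i - i = 0 := Nat.sub_self i
    have : ∀ (n : ℕ) (e : n = 0) (hle : i ≤ i + n), f i (i + n) hle (c n).1 = w := by
      rintro n rfl hle
      show f i i le_rfl (c 0).1 = w
      rw [hid]; rfl
    exact this (i - i) h0 (by omega)

/-- range of the double dual of a linear map is the double annihilator of the range. -/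
theorem range_dualMap_dualMap (k : Type) [Field k] {A B : Type} [AddCommGroup A] [Module k A]
    [AddCommGroup B] [Module k B] (g : A →ₗ[k] B) :
    LinearMap.range (g.dualMap.dualMap)
      = (LinearMap.range g).dualAnnihilator.dualAnnihilator := by
  rw [LinearMap.range_dualMap_eq_dualAnnihilator_ker,
    LinearMap.ker_dualMap_eq_dualAnnihilator_range]

set_option maxHeartbeats 1000000 in
theorem stmt19 (k : Type) [Field k] (U : ℕ → Type) [∀ i, AddCommGroup (U i)]
    [∀ i, Module k (U i)] (f : ∀ i j, i ≤ j → (U j →ₗ[k] U i))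
    -- {U_i} is an inverse system:
    (hid : ∀ i, f i i le_rfl = LinearMap.id)
    (hcomp : ∀ (i j l : ℕ) (hij : i ≤ j) (hjl : j ≤ l),
      (f i j hij) ∘ₗ (f j l hjl) = f i l (hij.trans hjl))
    -- the Mittag-Leffler condition:
    (hML : MittagLeffler k U f)
    -- the inverse limit of the double-dual system is finite-dimensional:
    (hfd : Module.Finite k
      (invLimit k (fun i => Module.Dual k (Module.Dual k (U i)))
        (fun i j h => ((f i j h).dualMap).dualMap))) :
    Nonempty
      ((invLimit k U f) ≃ₗ[k]
        (invLimit k (fun i => Module.Dual k (Module.Dual k (U i)))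
          (fun i j h => ((f i j h).dualMap).dualMap))) := by
  classical
  set DD : ℕ → Type := fun i => Module.Dual k (Module.Dual k (U i)) with hDD
  set F : ∀ i j, i ≤ j → (DD j →ₗ[k] DD i) := fun i j h => ((f i j h).dualMap).dualMap with hF
  -- basic properties of the double-dual system
  have Fid : ∀ i, F i i le_rfl = LinearMap.id := by
    intro i
    show ((f i i le_rfl).dualMap).dualMap = LinearMap.id
    rw [hid i, LinearMap.dualMap_id, LinearMap.dualMap_id]
  have Fcomp : ∀ (i j l : ℕ) (hij : i ≤ j) (hjl : j ≤ l),
      (F i j hij) ∘ₗ (F j l hjl) = F i l (hij.trans hjl) := by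
    intro i j l hij hjl
    show (f i j hij).dualMap.dualMap ∘ₗ (f j l hjl).dualMap.dualMap
      = (f i l (hij.trans hjl)).dualMap.dualMap
    rw [LinearMap.dualMap_comp_dualMap, LinearMap.dualMap_comp_dualMap, hcomp]
  -- naturality of evaluation
  have nat : ∀ (i j : ℕ) (h : i ≤ j) (u : U j),
      F i j h (Module.Dual.eval k (U j) u) = Module.Dual.eval k (U i) (f i j h u) := by
    intro i j h u
    rfl
  -- choose stabilization indices
  choose s hs using hML
  set V : ∀ i, Submodule k (U i) :=
    fun i => LinearMap.range (f i (i + s i) (Nat.le_add_right i (s i))) with hV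
  set W : ∀ i, Submodule k (DD i) := fun i => (V i).dualAnnihilator.dualAnnihilator with hW
  -- the stable ranges of the double dual system
  have hWrange : ∀ (i j : ℕ) (h : i ≤ j), s i ≤ j - i →
      LinearMap.range (F i j h) = W i := by
    intro i j h hst
    obtain ⟨t, rfl⟩ : ∃ t, j = i + t := ⟨j - i, by omega⟩
    have hst' : s i ≤ t := by omega
    show LinearMap.range ((f i (i + t) h).dualMap.dualMap) = W i
    rw [range_dualMap_dualMap, hs i t hst']
  -- surjectivity of one-step transition maps between stable ranges
  have hsurjW : ∀ n, ∀ v ∈ W n, ∃ u ∈ W (n + 1), F n (n + 1) (Nat.le_succ n) u = v := by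
    intro n v hv
    set T : ℕ := max (n + s n) (n + 1 + s (n + 1)) with hT
    have hnT : n ≤ T := by omega
    have hn1T : n + 1 ≤ T := by omega
    have h1 : LinearMap.range (F n T hnT) = W n := hWrange n T hnT (by omega)
    have h2 : LinearMap.range (F (n + 1) T hn1T) = W (n + 1) := hWrange (n + 1) T hn1T (by omega)
    rw [← h1] at hv
    obtain ⟨z, hz⟩ := hv
    refine ⟨F (n + 1) T hn1T z, h2 ▸ LinearMap.mem_range_self _ z, ?_⟩
    rw [← hz, ← LinearMap.comp_apply, Fcomp]
  -- each W i is contained in the image of the projection from the limit, hence fin.dim.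
  have hWfd : ∀ i, FiniteDimensional k (W i) := by
    intro i
    set π : (invLimit k DD F) →ₗ[k] DD i :=
      (LinearMap.proj i) ∘ₗ (invLimit k DD F).subtype with hπ
    have hle : W i ≤ LinearMap.range π := by
      intro v hv
      obtain ⟨x, hx, hxi⟩ := lift_mem_invLimit k DD F Fid Fcomp W hsurjW i v hv
      exact ⟨⟨x, hx⟩, hxi⟩
    haveI : Module.Finite k (invLimit k DD F) := hfd
    haveI : FiniteDimensional k (LinearMap.range π) := Module.Finite.range π
    exact Submodule.finiteDimensional_of_le hle
  -- hence each V i is finite dimensional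
  have hVfd : ∀ i, FiniteDimensional k (V i) := by
    intro i
    have hle : (V i).map (Module.Dual.eval k (U i)) ≤ W i :=
      Subspace.map_le_dualAnnihilator_dualAnnihilator (V i)
    haveI := hWfd i
    haveI : FiniteDimensional k ((V i).map (Module.Dual.eval k (U i))) :=
      Submodule.finiteDimensional_of_le hle
    exact Module.Finite.equiv
      (Submodule.equivMapOfInjective (Module.Dual.eval k (U i))
        (Module.eval_apply_injective k) (V i)).symm
  -- consequently W i is the image of V i under evaluation
  have hWev : ∀ i, W i = (V i).map (Module.Dual.eval k (U i)) := by
    intro i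
    haveI := hVfd i
    exact Subspace.dualAnnihilator_dualAnnihilator_eq_map (V i)
  -- membership of limit elements in W
  have hmemW : ∀ φ, φ ∈ invLimit k DD F → ∀ i, φ i ∈ W i := by
    intro φ hφ i
    have h := hφ i (i + s i) (Nat.le_add_right i (s i))
    rw [← hWrange i (i + s i) (Nat.le_add_right i (s i)) (by omega)]
    exact ⟨φ (i + s i), h⟩
  -- the natural map
  set E : (∀ i, U i) →ₗ[k] (∀ i, DD i) :=
    LinearMap.pi (fun i => (Module.Dual.eval k (U i)) ∘ₗ (LinearMap.proj i)) with hE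
  have hEmem : ∀ x ∈ invLimit k U f, E x ∈ invLimit k DD F := by
    intro x hx i j h
    show F i j h (Module.Dual.eval k (U j) (x j)) = Module.Dual.eval k (U i) (x i)
    rw [nat i j h (x j), hx i j h]
  set η : (invLimit k U f) →ₗ[k] (invLimit k DD F) :=
    LinearMap.codRestrict (invLimit k DD F) (E ∘ₗ (invLimit k U f).subtype)
      (fun x => hEmem x.1 x.2) with hη
  have hinj : Function.Injective η := by
    intro x y hxy
    ext i
    have h2 : Module.Dual.eval k (U i) (x.1 i) = Module.Dual.eval k (U i) (y.1 i) :=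
      congrFun (congrArg Subtype.val hxy) i
    exact Module.eval_apply_injective k h2
  have hsurjη : Function.Surjective η := by
    intro φ
    have hmem : ∀ i, (φ : ∀ i, DD i) i ∈ (V i).map (Module.Dual.eval k (U i)) := by
      intro i
      rw [← hWev i]
      exact hmemW φ.1 φ.2 i
    choose u hu hev using fun i => hmem i
    have hcompat : ∀ (i j : ℕ) (h : i ≤ j), f i j h (u j) = u i := by
      intro i j h
      apply Module.eval_apply_injective k
      rw [← nat i j h (u j), hev j, hev i]
      exact φ.2 i j h
    refine ⟨⟨u, hcompat⟩, ?_⟩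
    apply Subtype.ext
    funext i
    exact hev i
  exact ⟨LinearEquiv.ofBijective η ⟨hinj, hsurjη⟩⟩


end
end
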